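/- If H ≤ PL₊(I) is generated by a finite set of nice generators, then H equals its own split group: S(H) = H. Equivalently, every one-bump factor of every element of H already lies in H. -/

import Mathlib

open Set

namespace PLPaper

/-- We model `PL₊(I)` inside the group of bijections of `ℝ` with *opposite*
composition, so that the group acts on `ℝ` on the right:
`x · (g * h) = (x · g) · h`. -/
abbrev PermR : Type := (Equiv.Perm ℝ)ᵐᵒᵖ

/-- The (right) action of `g` on the point `x`. -/
def ap (g : PermR) (x : ℝ) : ℝ := g.unop x

/-- `g` is affine on a neighbourhood of `x`. -/
def IsLocallyAffineAt (g : PermR) (x : ℝ) : Prop :=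
  ∃ m b : ℝ, ∀ᶠ y in nhds x, ap g y = m * y + b

/-- The breakpoints of `g`: points of `(0,1)` where `g` is not locally affine
(equivalently, for a PL map, where the derivative fails to exist). -/
def Breakpoints (g : PermR) : Set ℝ :=
  {x ∈ Ioo (0:ℝ) 1 | ¬ IsLocallyAffineAt g x}

/-- `g` is an orientation-preserving piecewise-linear homeomorphism of `[0,1]`
(extended by the identity to all of `ℝ`), with finitely many breakpoints. -/
def IsPL (g : PermR) : Prop :=
  StrictMono (ap g) ∧ (∀ x ∉ Ioo (0:ℝ) 1, ap g x = x) ∧ (Breakpoints g).Finite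

/-- The support of `g`. -/
def Supp (g : PermR) : Set ℝ := {x | ap g x ≠ x}

/-- `(a,b)` is an orbital of `g`, i.e. a connected component of `Supp g`. -/
def IsOrbital (g : PermR) (a b : ℝ) : Prop :=
  a < b ∧ Ioo a b ⊆ Supp g ∧ a ∉ Supp g ∧ b ∉ Supp g

/-- The support of a subgroup `G`. -/
def GSupp (G : Subgroup PermR) : Set ℝ := ⋃ g ∈ (G : Set PermR), Supp g

/-- `(a,b)` is an orbital of the group `G`, i.e. a connected component of its support. -/
def IsGroupOrbital (G : Subgroup PermR) (a b : ℝ) : Prop :=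
  a < b ∧ Ioo a b ⊆ GSupp G ∧ a ∉ GSupp G ∧ b ∉ GSupp G

/-- The pair `g, h` carries a transition chain: orbitals `(a,b)` of `g` and
`(c,d)` of `h` with `a < c < b < d`. -/
def ElemsTransitionChain (g h : PermR) : Prop :=
  ∃ a b c d : ℝ, IsOrbital g a b ∧ IsOrbital h c d ∧ a < c ∧ c < b ∧ b < d

/-- The pair `g, h` carries a one-sided overlap: orbitals `(a,b)` of `g` and
`(a,c)` of `h`, or `(a,b)` of `g` and `(c,b)` of `h`, where `a < c < b`. -/
def ElemsOneSidedOverlap (g h : PermR) : Prop :=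
  ∃ a b c : ℝ, a < c ∧ c < b ∧
    ((IsOrbital g a b ∧ IsOrbital h a c) ∨ (IsOrbital g a b ∧ IsOrbital h c b))

def AdmitsTransitionChain (G : Subgroup PermR) : Prop :=
  ∃ g ∈ G, ∃ h ∈ G, ElemsTransitionChain g h

def AdmitsOneSidedOverlap (G : Subgroup PermR) : Prop :=
  ∃ g ∈ G, ∃ h ∈ G, ElemsOneSidedOverlap g h

/-- `G` admits a bad overlap: orbitals `A` of `f ∈ G` and `B` of `g ∈ G` which
intersect, are distinct, and neither closure is contained in the other orbital. -/
def AdmitsBadOverlap (G : Subgroup PermR) : Prop :=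
  ∃ f ∈ G, ∃ g ∈ G, ∃ a b c d : ℝ, IsOrbital f a b ∧ IsOrbital g c d ∧
    (Ioo a b ∩ Ioo c d).Nonempty ∧ Ioo a b ≠ Ioo c d ∧
    ¬ Icc a b ⊆ Ioo c d ∧ ¬ Icc c d ⊆ Ioo a b

/-- A tower: a set of signed orbitals `((a,b), g)` with pairwise nested orbitals,
where equal orbitals force equal signatures. -/
def IsTower (T : Set ((ℝ × ℝ) × PermR)) : Prop :=
  (∀ p ∈ T, IsOrbital p.2 p.1.1 p.1.2) ∧
  (∀ p ∈ T, ∀ q ∈ T,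
      Ioo p.1.1 p.1.2 ⊆ Ioo q.1.1 q.1.2 ∨ Ioo q.1.1 q.1.2 ⊆ Ioo p.1.1 p.1.2) ∧
  (∀ p ∈ T, ∀ q ∈ T, p.1 = q.1 → p.2 = q.2)

/-- `G` admits the tower `T` if `T` is a tower all of whose signatures lie in `G`. -/
def AdmitsTower (G : Subgroup PermR) (T : Set ((ℝ × ℝ) × PermR)) : Prop :=
  IsTower T ∧ ∀ p ∈ T, p.2 ∈ G

def AdmitsInfiniteTower (G : Subgroup PermR) : Prop :=
  ∃ T : Set ((ℝ × ℝ) × PermR), AdmitsTower G T ∧ T.Infinite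

/-- The set of breakpoints of the elements of a set `S`. -/
def BreakSet (S : Set PermR) : Set ℝ := ⋃ g ∈ S, Breakpoints g

/-- The derived length of a group: the least `n` with `derivedSeries G n = ⊥`. -/
noncomputable def derivedLength (G : Type*) [Group G] : ℕ :=
  sInf {n : ℕ | derivedSeries G n = ⊥}

/-- `Z` is a set of nice generators:
(Z0) each `h ∈ Z` has exactly one orbital;
(Z1) no pair of elements of `Z` forms a transition chain or a one-sided overlap;
(Z2) distinct elements of `Z` have distinct orbitals;
(Z3) for each `h ∈ Z` there is `r ∈ A_h` such that every orbital of an element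
of `Z` properly contained in `A_h` is contained in `(r, r·h)`. -/
def IsNiceSet (Z : Set PermR) : Prop :=
  (∀ h ∈ Z, (∃ a b : ℝ, IsOrbital h a b) ∧
    ∀ a b a' b' : ℝ, IsOrbital h a b → IsOrbital h a' b' → a = a' ∧ b = b') ∧
  (∀ g ∈ Z, ∀ h ∈ Z, ¬ ElemsTransitionChain g h ∧ ¬ ElemsOneSidedOverlap g h) ∧
  (∀ g ∈ Z, ∀ h ∈ Z, g ≠ h → ∀ a b : ℝ, IsOrbital g a b → ¬ IsOrbital h a b) ∧
  (∀ h ∈ Z, ∀ a b : ℝ, IsOrbital h a b → ∃ r ∈ Ioo a b,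
    ∀ h' ∈ Z, ∀ a' b' : ℝ, IsOrbital h' a' b' → Ioo a' b' ⊂ Ioo a b →
      Ioo a' b' ⊆ Ioo r (ap h r))

/-- `g` is the one-bump factor of `f` over the orbital `(a,b)` of `f`:
`g` agrees with `f` on `(a,b)` and is the identity elsewhere. -/
def IsOneBumpFactor (g f : PermR) (a b : ℝ) : Prop :=
  IsOrbital f a b ∧ (∀ x ∈ Ioo a b, ap g x = ap f x) ∧ (∀ x ∉ Ioo a b, ap g x = x)

/-- `g` is a one-bump factor of `f`. -/
def IsFactorOf (g f : PermR) : Prop := ∃ a b : ℝ, IsOneBumpFactor g f a b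

/-- `((a,b), g)` is a factor signed orbital associated to (an element of) `G`. -/
def AssociatedFactor (G : Subgroup PermR) (a b : ℝ) (g : PermR) : Prop :=
  ∃ f ∈ G, IsOneBumpFactor g f a b

/-- The split group `S(G)`: the subgroup generated by the one-bump factors of
all elements of `G`. -/
def SplitGroup (G : Subgroup PermR) : Subgroup PermR :=
  Subgroup.closure {g : PermR | ∃ f ∈ G, IsFactorOf g f}

/-! ### Basic lemmas about `ap` and `Supp` -/

lemma ap_mul (u v : PermR) (x : ℝ) : ap (u * v) x = ap v (ap u x) := rfl

lemma ap_one (x : ℝ) : ap 1 x = x := rfl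

lemma ap_inv_ap (u : PermR) (x : ℝ) : ap u⁻¹ (ap u x) = x := by
  show u⁻¹.unop (u.unop x) = x
  rw [MulOpposite.unop_inv]
  exact Equiv.symm_apply_apply _ _

lemma ap_ap_inv (u : PermR) (x : ℝ) : ap u (ap u⁻¹ x) = x := by
  show u.unop (u⁻¹.unop x) = x
  rw [MulOpposite.unop_inv]
  exact Equiv.apply_symm_apply _ _

lemma ap_injective (u : PermR) : Function.Injective (ap u) :=
  u.unop.injective

lemma ap_surjective (u : PermR) : Function.Surjective (ap u) :=
  u.unop.surjective

lemma permR_ext {u v : PermR} (h : ∀ x, ap u x = ap v x) : u = v := by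
  apply MulOpposite.unop_injective
  exact Equiv.ext h

lemma mem_supp {u : PermR} {x : ℝ} : x ∈ Supp u ↔ ap u x ≠ x := Iff.rfl

lemma ap_eq_self {u : PermR} {x : ℝ} (h : x ∉ Supp u) : ap u x = x := by
  simpa [Supp] using h

lemma ap_inv_eq_self {u : PermR} {x : ℝ} (h : ap u x = x) : ap u⁻¹ x = x := by
  conv_lhs => rw [← h]
  exact ap_inv_ap u x

lemma supp_inv (u : PermR) : Supp u⁻¹ = Supp u := by
  ext x
  constructor
  · intro hx
    by_contra hc
    rw [mem_supp, not_not] at hc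
    exact hx (ap_inv_eq_self hc)
  · intro hx
    by_contra hc
    rw [mem_supp, not_not] at hc
    apply hx
    have := ap_inv_eq_self (u := u⁻¹) (by simpa using hc)
    simpa using this

lemma ap_mem_supp {u : PermR} {x : ℝ} (h : x ∈ Supp u) : ap u x ∈ Supp u := by
  rw [mem_supp]
  intro he
  exact h (ap_injective u he)

lemma supp_mul_subset (u v : PermR) : Supp (u * v) ⊆ Supp u ∪ Supp v := by
  intro x hx
  by_contra hc
  simp only [mem_union, not_or] at hc
  apply hx
  rw [ap_mul, ap_eq_self hc.1, ap_eq_self hc.2]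

lemma ap_mem_of_supp_subset {u : PermR} {D : Set ℝ} (hu : Supp u ⊆ D) {x : ℝ}
    (hx : x ∈ D) : ap u x ∈ D := by
  by_cases h : x ∈ Supp u
  · exact hu (ap_mem_supp h)
  · rw [ap_eq_self h]; exact hx

lemma supp_one : Supp (1 : PermR) = ∅ := by
  ext x; simp [Supp, ap]
/-! ### Closure, words, supports, commuting splits -/

lemma exists_word {Y : Set PermR} {x : PermR} (hx : x ∈ Subgroup.closure Y) :
    ∃ l : List PermR, (∀ y ∈ l, y ∈ Y ∨ y⁻¹ ∈ Y) ∧ l.prod = x := by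
  have hx' : x ∈ Submonoid.closure (Y ∪ Y⁻¹) := by
    rw [← Subgroup.closure_toSubmonoid Y]
    exact hx
  obtain ⟨l, hl, hprod⟩ := Submonoid.exists_list_of_mem_closure hx'
  refine ⟨l, fun y hy => ?_, hprod⟩
  rcases hl y hy with h | h
  · exact Or.inl h
  · exact Or.inr (Set.mem_inv.mp h)

lemma supp_list_prod (l : List PermR) : Supp l.prod ⊆ ⋃ y ∈ l, Supp y := by
  induction l with
  | nil => simp [supp_one]
  | cons a t ih =>
    rw [List.prod_cons]
    intro x hx
    rcases supp_mul_subset a t.prod hx with h | h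
    · exact mem_biUnion (List.mem_cons_self (a := a) (l := t)) h
    · obtain ⟨y, hy, hxy⟩ := mem_iUnion₂.mp (ih h)
      exact mem_biUnion (List.mem_cons_of_mem a hy) hxy

lemma supp_closure {Y : Set PermR} {x : PermR} (hx : x ∈ Subgroup.closure Y) :
    Supp x ⊆ ⋃ y ∈ Y, Supp y := by
  induction hx using Subgroup.closure_induction with
  | mem y hy => exact subset_biUnion_of_mem hy
  | one => simp [supp_one]
  | mul u v hu hv ihu ihv =>
      exact (supp_mul_subset u v).trans (union_subset ihu ihv)
  | inv u hu ihu => rw [supp_inv]; exact ihu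

lemma commute_of_disjoint_supp {u v : PermR} (h : Supp u ∩ Supp v = ∅) :
    u * v = v * u := by
  apply permR_ext
  intro x
  rw [ap_mul, ap_mul]
  have hd : ∀ y : ℝ, y ∈ Supp u → y ∉ Supp v := fun y hy hv =>
    (Set.eq_empty_iff_forall_notMem.mp h y) ⟨hy, hv⟩
  by_cases hu : x ∈ Supp u
  · have h1 : ap v x = x := ap_eq_self (hd x hu)
    have h2 : ap v (ap u x) = ap u x := ap_eq_self (hd _ (ap_mem_supp hu))
    rw [h1, h2]
  · have h1 : ap u x = x := ap_eq_self hu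
    rw [h1]
    by_cases hv : x ∈ Supp v
    · have : ap v x ∈ Supp v := ap_mem_supp hv
      have : ap u (ap v x) = ap v x := ap_eq_self (fun hc => hd _ hc this)
      rw [this]
    · rw [ap_eq_self hv, h1]

/-- Elements of `closure Y₁` commute with elements of `closure Y₂` whenever the
supports of `Y₁` and `Y₂` live in disjoint sets. -/
lemma closure_commute {Y₁ Y₂ : Set PermR} {D₁ D₂ : Set ℝ}
    (h1 : ∀ y ∈ Y₁, Supp y ⊆ D₁) (h2 : ∀ y ∈ Y₂, Supp y ⊆ D₂)
    (hd : D₁ ∩ D₂ = ∅) {u v : PermR}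
    (hu : u ∈ Subgroup.closure Y₁) (hv : v ∈ Subgroup.closure Y₂) :
    u * v = v * u := by
  have hsu : Supp u ⊆ D₁ := (supp_closure hu).trans (iUnion₂_subset h1)
  have hsv : Supp v ⊆ D₂ := (supp_closure hv).trans (iUnion₂_subset h2)
  apply commute_of_disjoint_supp
  rw [Set.eq_empty_iff_forall_notMem]
  intro x ⟨hx1, hx2⟩
  exact (Set.eq_empty_iff_forall_notMem.mp hd x) ⟨hsu hx1, hsv hx2⟩

/-- Binary commuting split: each element of the closure of a union with
disjoint support regions factors. -/
lemma closure_split {Y₁ Y₂ : Set PermR} {D₁ D₂ : Set ℝ}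
    (h1 : ∀ y ∈ Y₁, Supp y ⊆ D₁) (h2 : ∀ y ∈ Y₂, Supp y ⊆ D₂)
    (hd : D₁ ∩ D₂ = ∅) {w : PermR} (hw : w ∈ Subgroup.closure (Y₁ ∪ Y₂)) :
    ∃ u ∈ Subgroup.closure Y₁, ∃ v ∈ Subgroup.closure Y₂, w = u * v := by
  induction hw using Subgroup.closure_induction with
  | mem y hy =>
      rcases hy with hy | hy
      · exact ⟨y, Subgroup.subset_closure hy, 1, Subgroup.one_mem _, (mul_one y).symm⟩
      · exact ⟨1, Subgroup.one_mem _, y, Subgroup.subset_closure hy, (one_mul y).symm⟩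
  | one => exact ⟨1, Subgroup.one_mem _, 1, Subgroup.one_mem _, (one_mul 1).symm⟩
  | mul a b ha hb iha ihb =>
      obtain ⟨u, hu, v, hv, rfl⟩ := iha
      obtain ⟨u', hu', v', hv', rfl⟩ := ihb
      refine ⟨u * u', Subgroup.mul_mem _ hu hu', v * v', Subgroup.mul_mem _ hv hv', ?_⟩
      have hc : v * u' = u' * v := closure_commute h2 h1 (by rw [inter_comm] at hd; exact hd) hv hu'
      calc u * v * (u' * v') = u * (v * u') * v' := by group
        _ = u * (u' * v) * v' := by rw [hc]
        _ = u * u' * (v * v') := by group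
  | inv a ha iha =>
      obtain ⟨u, hu, v, hv, rfl⟩ := iha
      refine ⟨u⁻¹, Subgroup.inv_mem _ hu, v⁻¹, Subgroup.inv_mem _ hv, ?_⟩
      have hc : u⁻¹ * v⁻¹ = v⁻¹ * u⁻¹ :=
        closure_commute h1 h2 hd (Subgroup.inv_mem _ hu) (Subgroup.inv_mem _ hv)
      rw [mul_inv_rev, hc]

/-- Multi-way commuting split over a finite index set. -/
lemma closure_multi_split {ι : Type} (P : Finset ι) (Y : ι → Set PermR) (D : ι → Set ℝ)
    (hY : ∀ i ∈ P, ∀ y ∈ Y i, Supp y ⊆ D i)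
    (hD : ∀ i ∈ P, ∀ j ∈ P, i ≠ j → D i ∩ D j = ∅) :
    ∀ w ∈ Subgroup.closure (⋃ i ∈ P, Y i),
      ∃ l : List PermR, w = l.prod ∧ ∀ u ∈ l, ∃ i ∈ P, u ∈ Subgroup.closure (Y i) := by
  classical
  induction P using Finset.induction with
  | empty =>
      intro w hw
      simp only [Finset.notMem_empty, iUnion_of_empty, iUnion_empty] at hw
      rw [Subgroup.closure_empty, Subgroup.mem_bot] at hw
      exact ⟨[], by simp [hw], by simp⟩
  | insert j s hj ih =>
      intro w hw
      have hsplit : ∃ u ∈ Subgroup.closure (Y j), ∃ v ∈ Subgroup.closure (⋃ i ∈ s, Y i),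
          w = u * v := by
        apply closure_split (D₁ := D j) (D₂ := ⋃ i ∈ s, D i)
        · exact fun y hy => hY j (Finset.mem_insert_self j s) y hy
        · intro y hy
          obtain ⟨i, hi, hyi⟩ := mem_iUnion₂.mp hy
          exact (hY i (Finset.mem_insert_of_mem hi) y hyi).trans (subset_biUnion_of_mem hi)
        · rw [Set.eq_empty_iff_forall_notMem]
          rintro x ⟨hx1, hx2⟩
          obtain ⟨i, hi, hxi⟩ := mem_iUnion₂.mp hx2
          have : i ≠ j := fun hc => hj (hc ▸ hi)
          exact (Set.eq_empty_iff_forall_notMem.mp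
            (hD j (Finset.mem_insert_self j s) i (Finset.mem_insert_of_mem hi) this.symm) x)
            ⟨hx1, hxi⟩
        · have : (⋃ i ∈ insert j s, Y i) = Y j ∪ ⋃ i ∈ s, Y i := by
            simp [Finset.mem_insert, iUnion_or, iUnion_union_distrib]
          rw [← this]; exact hw
      obtain ⟨u, hu, v, hv, rfl⟩ := hsplit
      obtain ⟨l, hl, hmem⟩ := ih (fun i hi => hY i (Finset.mem_insert_of_mem hi))
        (fun i hi j' hj' => hD i (Finset.mem_insert_of_mem hi) j' (Finset.mem_insert_of_mem hj')) v hv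
      refine ⟨u :: l, by rw [List.prod_cons, hl], ?_⟩
      intro x hx
      rcases List.mem_cons.mp hx with rfl | hx
      · exact ⟨j, Finset.mem_insert_self j s, hu⟩
      · obtain ⟨i, hi, hxi⟩ := hmem x hx
        exact ⟨i, Finset.mem_insert_of_mem hi, hxi⟩
/-! ### PL maps: continuity, supports, orbitals -/

lemma ap_continuous {g : PermR} (hmono : StrictMono (ap g)) : Continuous (ap g) := by
  have hsurj : Function.Surjective (ap g) := ap_surjective g
  have := StrictMono.coe_orderIsoOfSurjective (ap g) hmono hsurj
  rw [← this]
  exact OrderIso.continuous _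

lemma supp_isOpen {g : PermR} (hmono : StrictMono (ap g)) : IsOpen (Supp g) := by
  have : Supp g = {x | ap g x = x}ᶜ := by ext x; simp [Supp]
  rw [this]
  exact (isClosed_eq (ap_continuous hmono) continuous_id).isOpen_compl

lemma supp_subset_unit {g : PermR} (hg : IsPL g) : Supp g ⊆ Ioo (0:ℝ) 1 := by
  intro x hx
  by_contra hc
  exact hx (hg.2.1 x hc)

lemma ap_inv_strictMono {g : PermR} (hmono : StrictMono (ap g)) :
    StrictMono (ap g⁻¹) := by
  intro x y hxy
  rcases lt_trichotomy (ap g⁻¹ x) (ap g⁻¹ y) with h | h | h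
  · exact h
  · exfalso
    have := congrArg (ap g) h
    rw [ap_ap_inv, ap_ap_inv] at this
    linarith
  · exfalso
    have := hmono h
    rw [ap_ap_inv, ap_ap_inv] at this
    linarith

/-- Two orbitals of the same element that intersect coincide. -/
lemma orbital_eq_of_inter {g : PermR} {a b c d : ℝ} (h1 : IsOrbital g a b)
    (h2 : IsOrbital g c d) (hne : (Ioo a b ∩ Ioo c d).Nonempty) : a = c ∧ b = d := by
  obtain ⟨x, hx1, hx2⟩ := hne
  constructor
  · rcases lt_trichotomy a c with h | h | h
    · exact absurd (h1.2.1 ⟨h, hx2.1.trans hx1.2⟩) h2.2.2.1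
    · exact h
    · exact absurd (h2.2.1 ⟨h, hx1.1.trans hx2.2⟩) h1.2.2.1
  · rcases lt_trichotomy b d with h | h | h
    · exact absurd (h2.2.1 ⟨hx2.1.trans hx1.2, h⟩) h1.2.2.2
    · exact h
    · exact absurd (h1.2.1 ⟨hx1.1.trans hx2.2, h⟩) h2.2.2.2

/-- Around each point of the (open) support there is an orbital. -/
lemma exists_orbital_of_mem_supp {g : PermR} (hg : IsPL g) {x : ℝ} (hx : x ∈ Supp g) :
    ∃ c d : ℝ, IsOrbital g c d ∧ x ∈ Ioo c d := by
  have hopen : IsOpen (Supp g) := supp_isOpen hg.1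
  have hunit : Supp g ⊆ Ioo (0:ℝ) 1 := supp_subset_unit hg
  have hx01 : x ∈ Ioo (0:ℝ) 1 := hunit hx
  obtain ⟨ε, hε, hball⟩ := Metric.isOpen_iff.mp hopen x hx
  -- left endpoint
  set L : Set ℝ := {y | y ≤ x ∧ y ∉ Supp g} with hL
  have hL0 : (0:ℝ) ∈ L := ⟨le_of_lt hx01.1, fun hc => (hunit hc).1.ne rfl⟩
  have hLbdd : BddAbove L := ⟨x, fun y hy => hy.1⟩
  set c := sSup L with hc
  have hcx : c ≤ x - ε := by
    apply csSup_le ⟨0, hL0⟩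
    intro y hy
    by_contra hcon
    push_neg at hcon
    apply hy.2
    apply hball
    rw [Metric.mem_ball, Real.dist_eq, abs_lt]
    constructor <;> linarith [hy.1]
  have hcmem : ∀ y, c < y → y ≤ x → y ∈ Supp g := by
    intro y hcy hyx
    by_contra hcon
    exact absurd (le_csSup hLbdd ⟨hyx, hcon⟩) (not_le.mpr hcy)
  have hcnot : c ∉ Supp g := by
    intro hcon
    obtain ⟨ε', hε', hball'⟩ := Metric.isOpen_iff.mp hopen c hcon
    have : ∀ y ∈ L, y ≤ c - ε' := by
      intro y hy
      by_contra hcon2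
      push_neg at hcon2
      apply hy.2
      apply hball'
      rw [Metric.mem_ball, Real.dist_eq, abs_lt]
      have hyc : y ≤ c := le_csSup hLbdd hy
      constructor <;> linarith
    have := csSup_le ⟨0, hL0⟩ this
    rw [← hc] at this
    linarith
  -- right endpoint
  set R : Set ℝ := {y | x ≤ y ∧ y ∉ Supp g} with hR
  have hR1 : (1:ℝ) ∈ R := ⟨le_of_lt hx01.2, fun hcon => (hunit hcon).2.ne rfl⟩
  have hRbdd : BddBelow R := ⟨x, fun y hy => hy.1⟩
  set d := sInf R with hd
  have hdx : x + ε ≤ d := by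
    apply le_csInf ⟨1, hR1⟩
    intro y hy
    by_contra hcon
    push_neg at hcon
    apply hy.2
    apply hball
    rw [Metric.mem_ball, Real.dist_eq, abs_lt]
    constructor <;> linarith [hy.1]
  have hdmem : ∀ y, x ≤ y → y < d → y ∈ Supp g := by
    intro y hxy hyd
    by_contra hcon
    exact absurd (csInf_le hRbdd ⟨hxy, hcon⟩) (not_le.mpr hyd)
  have hdnot : d ∉ Supp g := by
    intro hcon
    obtain ⟨ε', hε', hball'⟩ := Metric.isOpen_iff.mp hopen d hcon
    have : ∀ y ∈ R, d + ε' ≤ y := by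
      intro y hy
      by_contra hcon2
      push_neg at hcon2
      apply hy.2
      apply hball'
      rw [Metric.mem_ball, Real.dist_eq, abs_lt]
      have hyd : d ≤ y := csInf_le hRbdd hy
      constructor <;> linarith
    have := le_csInf ⟨1, hR1⟩ this
    rw [← hd] at this
    linarith
  refine ⟨c, d, ⟨by linarith, ?_, hcnot, hdnot⟩, by constructor <;> linarith⟩
  intro y hy
  rcases le_or_gt y x with h | h
  · exact hcmem y hy.1 h
  · exact hdmem y (le_of_lt h) hy.2

/-- Nonempty open intervals with equal underlying sets have equal endpoints. -/
lemma Ioo_eq_endpoints {a b c d : ℝ} (hab : a < b) (h : Ioo a b = Ioo c d) :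
    a = c ∧ b = d := by
  have hcd : c < d := by
    by_contra hcon
    push_neg at hcon
    rw [Ioo_eq_empty (not_lt.mpr hcon)] at h
    exact (Set.nonempty_Ioo.mpr hab).ne_empty h
  constructor
  · have h1 := csInf_Ioo hab
    have h2 := csInf_Ioo hcd
    rw [h] at h1
    rw [h1] at h2
    exact h2.symm ▸ rfl
  · have h1 := csSup_Ioo hab
    have h2 := csSup_Ioo hcd
    rw [h] at h1
    rw [h1] at h2
    exact h2.symm ▸ rfl

/-- For a PL map with a unique orbital, the support is exactly that orbital. -/
lemma supp_eq_of_unique_orbital {g : PermR} (hg : IsPL g) {a b : ℝ}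
    (hab : IsOrbital g a b)
    (huniq : ∀ a' b' : ℝ, IsOrbital g a' b' → a = a' ∧ b = b') :
    Supp g = Ioo a b := by
  apply Subset.antisymm
  · intro x hx
    obtain ⟨c, d, hcd, hxcd⟩ := exists_orbital_of_mem_supp hg hx
    obtain ⟨rfl, rfl⟩ := huniq c d hcd
    exact hxcd
  · exact hab.2.1

/-! ### Consequences of niceness -/

lemma Ioo_subset_endpoints {a b c d : ℝ} (hab : a < b) (hsub : Ioo a b ⊆ Ioo c d) :
    c ≤ a ∧ b ≤ d := by
  have hne : (Ioo a b).Nonempty := nonempty_Ioo.mpr hab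
  constructor
  · have : c ≤ sInf (Ioo a b) := le_csInf hne (fun y hy => le_of_lt (hsub hy).1)
    rwa [csInf_Ioo hab] at this
  · have : sSup (Ioo a b) ≤ d := csSup_le hne (fun y hy => le_of_lt (hsub hy).2)
    rwa [csSup_Ioo hab] at this

lemma nice_subset {Z S : Set PermR} (hZ : IsNiceSet Z) (hS : S ⊆ Z) : IsNiceSet S :=
  ⟨fun h hh => hZ.1 h (hS hh),
   fun g hg h hh => hZ.2.1 g (hS hg) h (hS hh),
   fun g hg h hh => hZ.2.2.1 g (hS hg) h (hS hh),
   fun h hh a b hab => by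
     obtain ⟨r, hr, hrall⟩ := hZ.2.2.2 h (hS hh) a b hab
     exact ⟨r, hr, fun h' hh' a' b' hab' hsub => hrall h' (hS hh') a' b' hab' hsub⟩⟩

/-- Orbitals of elements of a nice set are nested or disjoint. -/
lemma nested_or_disjoint {Z : Set PermR} (hZ : IsNiceSet Z) {g h : PermR}
    (hg : g ∈ Z) (hh : h ∈ Z) {a b c d : ℝ} (hab : IsOrbital g a b)
    (hcd : IsOrbital h c d) :
    Ioo a b ∩ Ioo c d = ∅ ∨ Ioo a b ⊆ Ioo c d ∨ Ioo c d ⊆ Ioo a b := by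
  have hnotc1 : ¬ ElemsTransitionChain g h := (hZ.2.1 g hg h hh).1
  have hnotc2 : ¬ ElemsTransitionChain h g := (hZ.2.1 h hh g hg).1
  rcases lt_trichotomy a c with h1 | h1 | h1
  · rcases le_or_gt b c with h2 | h2
    · left
      rw [Set.eq_empty_iff_forall_notMem]
      rintro x ⟨hx1, hx2⟩
      exact absurd (hx1.2.trans_le h2) (not_lt.mpr (le_of_lt hx2.1))
    · rcases le_or_gt d b with h3 | h3
      · right; right
        exact Ioo_subset_Ioo (le_of_lt h1) h3
      · exact absurd ⟨a, b, c, d, hab, hcd, h1, h2, h3⟩ hnotc1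
  · subst h1
    rcases le_total b d with h2 | h2
    · right; left; exact Ioo_subset_Ioo le_rfl h2
    · right; right; exact Ioo_subset_Ioo le_rfl h2
  · rcases le_or_gt d a with h2 | h2
    · left
      rw [Set.eq_empty_iff_forall_notMem]
      rintro x ⟨hx1, hx2⟩
      exact absurd (hx2.2.trans_le h2) (not_lt.mpr (le_of_lt hx1.1))
    · rcases le_or_gt b d with h3 | h3
      · right; left
        exact Ioo_subset_Ioo (le_of_lt h1) h3
      · exact absurd ⟨c, d, a, b, hcd, hab, h1, h2, h3⟩ hnotc2

/-- The inverse of an element of a nice set of PL maps is not in the set. -/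
lemma inv_not_mem_nice {Z : Set PermR} (hZ : IsNiceSet Z) {h : PermR} (hh : h ∈ Z)
    (hmonoh : StrictMono (ap h)) : h⁻¹ ∉ Z := by
  intro hinv
  obtain ⟨⟨a, b, hab⟩, _⟩ := hZ.1 h hh
  obtain ⟨x, hx⟩ := nonempty_Ioo.mpr hab.1
  have hxsup : x ∈ Supp h := hab.2.1 hx
  by_cases he : h⁻¹ = h
  · -- h is an involution: contradicts strict monotonicity
    have h2 : ap h (ap h x) = x := by
      nth_rewrite 2 [← he]
      exact ap_ap_inv h x
    rcases lt_or_gt_of_ne hxsup with hlt | hgt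
    · have h3 := hmonoh hlt
      rw [h2] at h3
      linarith
    · have h3 := hmonoh hgt
      rw [h2] at h3
      linarith
  · -- h⁻¹ ≠ h but has the same orbital: contradicts (Z2)
    have horb : IsOrbital h⁻¹ a b := by
      refine ⟨hab.1, ?_, ?_, ?_⟩
      · rw [supp_inv h]; exact hab.2.1
      · rw [supp_inv h]; exact hab.2.2.1
      · rw [supp_inv h]; exact hab.2.2.2
    exact hZ.2.2.1 h hh h⁻¹ hinv (Ne.symm he) a b hab horb

/-- In a finite nice set, every point of some orbital lies in a maximal orbital. -/
lemma exists_top {Z : Set PermR} (hZfin : Z.Finite) (hZ : IsNiceSet Z)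
    (az bz : PermR → ℝ) (horb : ∀ z ∈ Z, IsOrbital z (az z) (bz z))
    {x : ℝ} {z₀ : PermR} (hz₀ : z₀ ∈ Z) (hx : x ∈ Ioo (az z₀) (bz z₀)) :
    ∃ t ∈ Z, x ∈ Ioo (az t) (bz t) ∧
      ∀ z ∈ Z, Ioo (az z) (bz z) ⊆ Ioo (az t) (bz t) ∨
        Ioo (az z) (bz z) ∩ Ioo (az t) (bz t) = ∅ := by
  classical
  set T : Set PermR := {z ∈ Z | x ∈ Ioo (az z) (bz z)} with hT
  have hTfin : T.Finite := hZfin.subset (fun z hz => hz.1)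
  have hTne : T.Nonempty := ⟨z₀, hz₀, hx⟩
  obtain ⟨t, ht, htmax⟩ := Set.Finite.exists_maximalFor (fun z => bz z - az z) T hTfin hTne
  refine ⟨t, ht.1, ht.2, ?_⟩
  intro z hz
  rcases nested_or_disjoint hZ hz ht.1 (horb z hz) (horb t ht.1) with hd | hsub | hsub
  · right; exact hd
  · left; exact hsub
  · -- t's orbital is inside z's: by maximality they coincide
    left
    have hzT : z ∈ T := ⟨hz, hsub ht.2⟩
    have hlen := Ioo_subset_endpoints (horb t ht.1).1 hsub
    have : bz t - az t ≤ bz z - az z := by linarith [hlen.1, hlen.2]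
    have heq := htmax (j := z) hzT this
    have ha : az t = az z := by linarith [hlen.1, hlen.2]
    have hb : bz t = bz z := by linarith [hlen.1, hlen.2]
    rw [ha, hb]

/-! ### Dynamics on a single orbital -/

lemma ap_zpow_succ (h : PermR) (k : ℤ) (x : ℝ) :
    ap (h ^ (k + 1)) x = ap h (ap (h ^ k) x) := by
  rw [zpow_add_one, ap_mul]

lemma ap_zpow_pred (h : PermR) (k : ℤ) (x : ℝ) :
    ap (h ^ (k - 1)) x = ap h⁻¹ (ap (h ^ k) x) := by
  rw [zpow_sub_one, ap_mul]

lemma ap_zpow_strictMono {h : PermR} (hmono : StrictMono (ap h)) (k : ℤ) :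
    StrictMono (ap (h ^ k)) := by
  induction k using Int.induction_on with
  | zero => intro x y hxy; simpa [ap_one] using hxy
  | succ n ih =>
      intro x y hxy
      rw [ap_zpow_succ, ap_zpow_succ]
      exact hmono (ih hxy)
  | pred n ih =>
      intro x y hxy
      have : ((-(n:ℤ) - 1)) = (-(n:ℤ)) - 1 := by ring
      rw [this, ap_zpow_pred, ap_zpow_pred]
      exact ap_inv_strictMono hmono (ih hxy)

section OneOrbital

variable {h : PermR} {p q : ℝ}

/-- `h` maps its orbital into itself. -/
lemma orbital_invariant (hsupp : Supp h = Ioo p q) {x : ℝ} (hx : x ∈ Ioo p q) :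
    ap h x ∈ Ioo p q :=
  ap_mem_of_supp_subset (le_of_eq hsupp) hx

lemma orbital_invariant_inv (hsupp : Supp h = Ioo p q) {x : ℝ} (hx : x ∈ Ioo p q) :
    ap h⁻¹ x ∈ Ioo p q :=
  ap_mem_of_supp_subset (le_of_eq ((supp_inv h).trans hsupp)) hx

/-- Sign constancy: if `h` pushes one point of its orbital up, it pushes every
point of the orbital up. -/
lemma up_on_orbital (hmonoh : StrictMono (ap h)) (hsupp : Supp h = Ioo p q) {r : ℝ}
    (hr : r ∈ Ioo p q) (hup : r < ap h r) : ∀ x ∈ Ioo p q, x < ap h x := by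
  intro x hx
  by_contra hcon
  push_neg at hcon
  have hxmoved : ap h x ≠ x := by rw [← mem_supp, hsupp]; exact hx
  have hxlt : ap h x < x := lt_of_le_of_ne hcon hxmoved
  set F : ℝ → ℝ := fun y => ap h y - y with hF
  have hFcont : Continuous F := (ap_continuous hmonoh).sub continuous_id
  have key : ∃ y, y ∈ Ioo p q ∧ F y = 0 := by
    rcases lt_trichotomy r x with hrx | hrx | hrx
    · have : (0:ℝ) ∈ Icc (F x) (F r) := ⟨by simp [hF]; linarith, by simp [hF]; linarith⟩
      have := intermediate_value_Icc' (le_of_lt hrx) (hFcont.continuousOn) this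
      obtain ⟨y, hy, hFy⟩ := this
      refine ⟨y, ⟨lt_of_lt_of_le hr.1 hy.1, lt_of_le_of_lt hy.2 hx.2⟩, hFy⟩
    · exfalso; rw [hrx] at hup; linarith
    · have : (0:ℝ) ∈ Icc (F x) (F r) := ⟨by simp [hF]; linarith, by simp [hF]; linarith⟩
      have := intermediate_value_Icc (le_of_lt hrx) (hFcont.continuousOn) this
      obtain ⟨y, hy, hFy⟩ := this
      refine ⟨y, ⟨lt_of_lt_of_le hx.1 hy.1, lt_of_le_of_lt hy.2 hr.2⟩, hFy⟩
  obtain ⟨y, hy, hFy⟩ := key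
  have : ap h y = y := by simp [hF] at hFy; linarith
  rw [← hsupp] at hy
  exact hy this

variable {r : ℝ}

/-- The ladder `ρ k = r · h^k`. -/
noncomputable def rho (h : PermR) (r : ℝ) (k : ℤ) : ℝ := ap (h ^ k) r

lemma rho_zero : rho h r 0 = r := by simp [rho, ap_one]

lemma rho_succ (k : ℤ) : rho h r (k + 1) = ap h (rho h r k) := ap_zpow_succ h k r

lemma rho_pred (k : ℤ) : rho h r (k - 1) = ap h⁻¹ (rho h r k) := ap_zpow_pred h k r

lemma rho_mem (hsupp : Supp h = Ioo p q) (hr : r ∈ Ioo p q) (k : ℤ) :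
    rho h r k ∈ Ioo p q := by
  induction k using Int.induction_on with
  | zero => rw [rho_zero]; exact hr
  | succ n ih => rw [rho_succ]; exact orbital_invariant hsupp ih
  | pred n ih =>
      have : (-(n:ℤ) - 1) = (-(n:ℤ)) - 1 := by ring
      rw [this, rho_pred]
      exact orbital_invariant_inv hsupp ih

lemma rho_strictMono (hmonoh : StrictMono (ap h)) (hsupp : Supp h = Ioo p q)
    (hr : r ∈ Ioo p q) (hup : r < ap h r) : StrictMono (rho h r) := by
  apply strictMono_int_of_lt_succ
  intro k
  rw [rho_succ]
  exact up_on_orbital hmonoh hsupp hr hup _ (rho_mem hsupp hr k)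

/-- Every point of the orbital lies in some rung interval `[ρ k, ρ (k+1))`. -/
lemma rho_cover (hmonoh : StrictMono (ap h)) (hsupp : Supp h = Ioo p q)
    (hr : r ∈ Ioo p q) (hup : r < ap h r) {x : ℝ} (hx : x ∈ Ioo p q) :
    ∃ N : ℤ, x ∈ Ico (rho h r N) (rho h r (N + 1)) := by
  have hupall := up_on_orbital hmonoh hsupp hr hup
  have hmono := hmonoh
  -- ∃ n, rho n ≤ x
  have hlow : ∃ n : ℤ, rho h r n ≤ x := by
    by_contra hcon
    push_neg at hcon
    set s := sInf (Set.range (rho h r)) with hs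
    have hbdd : BddBelow (Set.range (rho h r)) := ⟨x, by rintro y ⟨n, rfl⟩; exact le_of_lt (hcon n)⟩
    have hxs : x ≤ s := le_csInf ⟨rho h r 0, 0, rfl⟩ (by rintro y ⟨n, rfl⟩; exact le_of_lt (hcon n))
    have hsr : s ≤ r := by
      have := csInf_le hbdd ⟨0, rfl⟩
      rwa [rho_zero] at this
    have hsB : s ∈ Ioo p q := ⟨lt_of_lt_of_le hx.1 hxs, lt_of_le_of_lt hsr hr.2⟩
    -- h s is a lower bound of the range
    have hlb : ∀ y ∈ Set.range (rho h r), ap h s ≤ y := by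
      rintro y ⟨n, rfl⟩
      have h1 : s ≤ rho h r (n - 1) := csInf_le hbdd ⟨n - 1, rfl⟩
      have := hmono.monotone h1
      rw [← rho_succ (n-1)] at this
      simpa using this
    have : ap h s ≤ s := le_csInf ⟨rho h r 0, 0, rfl⟩ hlb
    exact absurd this (not_le.mpr (hupall s hsB))
  -- ∃ m, x < rho m
  have hhigh : ∃ m : ℤ, x < rho h r m := by
    by_contra hcon
    push_neg at hcon
    set s := sSup (Set.range (rho h r)) with hs
    have hbdd : BddAbove (Set.range (rho h r)) := ⟨x, by rintro y ⟨n, rfl⟩; exact hcon n⟩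
    have hsx : s ≤ x := csSup_le ⟨rho h r 0, 0, rfl⟩ (by rintro y ⟨n, rfl⟩; exact hcon n)
    have hrs : r ≤ s := by
      have := le_csSup hbdd ⟨0, rfl⟩
      rwa [rho_zero] at this
    have hsB : s ∈ Ioo p q := ⟨lt_of_lt_of_le hr.1 hrs, lt_of_le_of_lt hsx hx.2⟩
    have hub : ∀ y ∈ Set.range (rho h r), y ≤ ap h⁻¹ s := by
      rintro y ⟨n, rfl⟩
      have h1 : rho h r (n + 1) ≤ s := le_csSup hbdd ⟨n + 1, rfl⟩
      have := (ap_inv_strictMono hmono).monotone h1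
      rw [rho_succ n, ap_inv_ap] at this
      exact this
    have h2 : s ≤ ap h⁻¹ s := csSup_le ⟨rho h r 0, 0, rfl⟩ hub
    have h3 : ap h⁻¹ s < s := by
      have := (ap_inv_strictMono hmono) (hupall s hsB)
      rwa [ap_inv_ap] at this
    linarith
  -- greatest n with rho n ≤ x
  obtain ⟨n₀, hn₀⟩ := hlow
  obtain ⟨m₀, hm₀⟩ := hhigh
  have hrmono := rho_strictMono hmonoh hsupp hr hup
  obtain ⟨N, hN, hNmax⟩ := Int.exists_greatest_of_bdd (P := fun n => rho h r n ≤ x)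
    ⟨m₀, fun z hz => by
      by_contra hcon
      push_neg at hcon
      have : rho h r m₀ ≤ rho h r z := hrmono.monotone (le_of_lt hcon)
      linarith⟩
    ⟨n₀, hn₀⟩
  refine ⟨N, hN, ?_⟩
  by_contra hcon
  push_neg at hcon
  exact absurd (hNmax (N+1) hcon) (by linarith)

end OneOrbital

/-! ### Words, exponent sums, and the rewriting lemma -/

open scoped Classical in
/-- The exponent sum of `h` in a word. -/
noncomputable def wexp (h : PermR) (l : List PermR) : ℤ :=
  (l.map fun y => if y = h then (1:ℤ) else if y = h⁻¹ then -1 else 0).sum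

lemma wexp_nil (h : PermR) : wexp h [] = 0 := rfl

open scoped Classical in
lemma wexp_cons (h y : PermR) (t : List PermR) :
    wexp h (y :: t) = (if y = h then (1:ℤ) else if y = h⁻¹ then -1 else 0) + wexp h t := by
  simp [wexp]

lemma wexp_cons_self (h : PermR) (t : List PermR) : wexp h (h :: t) = 1 + wexp h t := by
  rw [wexp_cons]
  simp

lemma wexp_cons_inv (h : PermR) (hne : h⁻¹ ≠ h) (t : List PermR) :
    wexp h (h⁻¹ :: t) = -1 + wexp h t := by
  rw [wexp_cons]
  simp [hne]

lemma wexp_cons_other (h y : PermR) (h1 : y ≠ h) (h2 : y ≠ h⁻¹) (t : List PermR) :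
    wexp h (y :: t) = wexp h t := by
  rw [wexp_cons]
  simp [h1, h2]

/-- A PL element with an orbital is not an involution. -/
lemma inv_ne_self {h : PermR} (hmonoh : StrictMono (ap h)) {a b : ℝ} (hab : IsOrbital h a b) :
    h⁻¹ ≠ h := by
  intro he
  obtain ⟨x, hx⟩ := nonempty_Ioo.mpr hab.1
  have hxsup : x ∈ Supp h := hab.2.1 hx
  have h2 : ap h (ap h x) = x := by
    nth_rewrite 2 [← he]
    exact ap_ap_inv h x
  rcases lt_or_gt_of_ne hxsup with hlt | hgt
  · have h3 := hmonoh hlt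
    rw [h2] at h3
    linarith
  · have h3 := hmonoh hgt
    rw [h2] at h3
    linarith

/-- Conjugation maps closures to closures. -/
lemma conj_mem_closure {Y Y' : Set PermR} {c : PermR}
    (hmap : ∀ y ∈ Y, c * y * c⁻¹ ∈ Y') {u : PermR} (hu : u ∈ Subgroup.closure Y) :
    c * u * c⁻¹ ∈ Subgroup.closure Y' := by
  induction hu using Subgroup.closure_induction with
  | mem y hy => exact Subgroup.subset_closure (hmap y hy)
  | one => simpa using Subgroup.one_mem _
  | mul a b ha hb iha ihb =>
      have heq : c * (a * b) * c⁻¹ = (c * a * c⁻¹) * (c * b * c⁻¹) := by group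
      rw [heq]; exact Subgroup.mul_mem _ iha ihb
  | inv a ha iha =>
      have heq : c * a⁻¹ * c⁻¹ = (c * a * c⁻¹)⁻¹ := by group
      rw [heq]; exact Subgroup.inv_mem _ iha

/-- The `k`-th level conjugate set. -/
def XS (h : PermR) (S : Set PermR) (k : ℤ) : Set PermR :=
  (fun z => h ^ (-k) * z * h ^ k) '' S

/-- The rewriting lemma: any word in `h^{±1}` and small generators equals
`c * h ^ e` where `c` is a product of levelled conjugates of small generators
and `e` is the exponent sum. -/
lemma rewriting (h : PermR) (S : Set PermR) (hS : h ∉ S) (hS' : h⁻¹ ∉ S)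
    (hne : h⁻¹ ≠ h) :
    ∀ l : List PermR, (∀ y ∈ l, y = h ∨ y = h⁻¹ ∨ y ∈ S ∨ y⁻¹ ∈ S) →
    ∃ c ∈ Subgroup.closure (⋃ k ∈ Finset.Icc (-(l.length:ℤ)) (l.length:ℤ), XS h S k),
      l.prod = c * h ^ (wexp h l) := by
  intro l
  induction l with
  | nil =>
      intro _
      exact ⟨1, Subgroup.one_mem _, by simp [wexp_nil]⟩
  | cons y t ih =>
      intro hlet
      obtain ⟨c, hc, hprod⟩ := ih (fun z hz => hlet z (List.mem_cons_of_mem y hz))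
      have hmono : Subgroup.closure (⋃ k ∈ Finset.Icc (-(t.length:ℤ)) (t.length:ℤ), XS h S k) ≤
          Subgroup.closure (⋃ k ∈ Finset.Icc (-((y::t).length:ℤ)) (((y::t).length:ℤ)), XS h S k) := by
        apply Subgroup.closure_mono
        apply iUnion₂_subset
        intro k hk
        simp only [Finset.mem_Icc] at hk
        intro x hx
        refine mem_iUnion₂.mpr ⟨k, Finset.mem_Icc.mpr ?_, hx⟩
        simp only [List.length_cons, Nat.cast_add, Nat.cast_one]
        omega
      rcases hlet y (List.mem_cons_self (a := y) (l := t)) with hy | hy | hy | hy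
      · -- letter h
        have hy' := hy.symm
        subst hy'
        refine ⟨h * c * h⁻¹, ?_, ?_⟩
        · apply conj_mem_closure (Y := ⋃ k ∈ Finset.Icc (-(t.length:ℤ)) (t.length:ℤ), XS h S k)
            (fun z hz => ?_) hc
          obtain ⟨k, hk, hzk⟩ := mem_iUnion₂.mp hz
          obtain ⟨w, hw, rfl⟩ := hzk
          apply mem_iUnion₂.mpr
          refine ⟨k - 1, ?_, ⟨w, hw, ?_⟩⟩
          · simp only [Finset.mem_Icc] at hk
            rw [Finset.mem_Icc]
            simp only [List.length_cons, Nat.cast_add, Nat.cast_one]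
            omega
          · show h ^ (-(k-1)) * w * h ^ (k-1) = h * (h ^ (-k) * w * h ^ k) * h⁻¹
            group
        · rw [List.prod_cons, hprod, wexp_cons_self]
          have hz : h ^ ((1:ℤ) + wexp h t) = h * h ^ (wexp h t) := by
            rw [zpow_add, zpow_one]
          rw [hz]
          group
      · -- letter h⁻¹
        have hy' := hy.symm
        subst hy'
        refine ⟨h⁻¹ * c * h, ?_, ?_⟩
        · have heq : h⁻¹ * c * h = h⁻¹ * c * (h⁻¹)⁻¹ := by rw [inv_inv]
          rw [heq]
          apply conj_mem_closure (Y := ⋃ k ∈ Finset.Icc (-(t.length:ℤ)) (t.length:ℤ), XS h S k)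
            (fun z hz => ?_) hc
          obtain ⟨k, hk, hzk⟩ := mem_iUnion₂.mp hz
          obtain ⟨w, hw, rfl⟩ := hzk
          apply mem_iUnion₂.mpr
          refine ⟨k + 1, ?_, ⟨w, hw, ?_⟩⟩
          · simp only [Finset.mem_Icc] at hk
            rw [Finset.mem_Icc]
            simp only [List.length_cons, Nat.cast_add, Nat.cast_one]
            omega
          · show h ^ (-(k+1)) * w * h ^ (k+1) = h⁻¹ * (h ^ (-k) * w * h ^ k) * (h⁻¹)⁻¹
            group
        · rw [List.prod_cons, hprod, wexp_cons_inv h hne]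
          have hz : h ^ ((-1:ℤ) + wexp h t) = h⁻¹ * h ^ (wexp h t) := by
            rw [zpow_add, zpow_neg_one]
          rw [hz]
          group
      · -- small letter
        refine ⟨y * c, Subgroup.mul_mem _ ?_ (hmono hc), ?_⟩
        · apply Subgroup.subset_closure
          apply mem_iUnion₂.mpr
          refine ⟨0, by rw [Finset.mem_Icc]; omega, ⟨y, hy, by simp⟩⟩
        · have h1 : y ≠ h := fun he => hS (he ▸ hy)
          have h2 : y ≠ h⁻¹ := fun he => hS' (he ▸ hy)
          rw [List.prod_cons, hprod, wexp_cons_other h y h1 h2]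
          group
      · -- small letter, inverse
        refine ⟨y * c, Subgroup.mul_mem _ ?_ (hmono hc), ?_⟩
        · have heq : y = (y⁻¹)⁻¹ := by rw [inv_inv]
          rw [heq]
          apply Subgroup.inv_mem
          apply Subgroup.subset_closure
          apply mem_iUnion₂.mpr
          refine ⟨0, by rw [Finset.mem_Icc]; omega, ⟨y⁻¹, hy, by simp⟩⟩
        · have h1 : y ≠ h := by
            intro he
            subst he
            exact hS' hy
          have h2 : y ≠ h⁻¹ := by
            intro he
            apply hS
            rw [he, inv_inv] at hy
            exact hy
          rw [List.prod_cons, hprod, wexp_cons_other h y h1 h2]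
          group

/-! ### The level invariant and factor transfer -/

section Levels

variable {h : PermR} {p q r : ℝ} {S : Set PermR}

/-- The key invariant: a word in `h^{±1}` and generators supported in the
ground rung shifts rung intervals by the exponent sum. -/
lemma word_level (hmonoh : StrictMono (ap h)) (hsupp : Supp h = Ioo p q)
    (hr : r ∈ Ioo p q) (hup : r < ap h r)
    (hSsupp : ∀ z ∈ S, Supp z ⊆ Ioo (rho h r 0) (rho h r 1))
    (hS : h ∉ S) (hS' : h⁻¹ ∉ S) :
    ∀ l : List PermR, (∀ y ∈ l, y = h ∨ y = h⁻¹ ∨ y ∈ S ∨ y⁻¹ ∈ S) →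
    ∀ N : ℤ, ∀ x : ℝ, x ∈ Ico (rho h r N) (rho h r (N + 1)) →
      ap l.prod x ∈ Ico (rho h r (N + wexp h l)) (rho h r (N + wexp h l + 1)) := by
  have hmono := hmonoh
  have hrmono := rho_strictMono hmonoh hsupp hr hup
  have hpq : p < q := hr.1.trans hr.2
  have horb : IsOrbital h p q := by
    refine ⟨hpq, ?_, ?_, ?_⟩
    · rw [hsupp]
    · rw [hsupp]; simp
    · rw [hsupp]; simp
  have hne' : h⁻¹ ≠ h := inv_ne_self hmonoh horb
  intro l
  induction l with
  | nil =>
      intro _ N x hx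
      simpa [List.prod_nil, ap_one, wexp_nil] using hx
  | cons y t ih =>
      intro hlet N x hx
      have hyx : ap ((y :: t).prod) x = ap t.prod (ap y x) := by
        rw [List.prod_cons, ap_mul]
      have iht := ih (fun z hz => hlet z (List.mem_cons_of_mem y hz))
      rcases hlet y (List.mem_cons_self (a := y) (l := t)) with hy | hy | hy | hy
      · -- letter h
        have hy' := hy.symm; subst hy'
        have hstep : ap h x ∈ Ico (rho h r (N + 1)) (rho h r (N + 1 + 1)) := by
          constructor
          · rw [rho_succ N]
            exact hmono.monotone hx.1
          · rw [rho_succ (N+1)]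
            exact hmono hx.2
        have := iht (N + 1) (ap h x) hstep
        rw [hyx, wexp_cons_self]
        have e1 : N + (1 + wexp h t) = N + 1 + wexp h t := by ring
        rw [e1]
        exact this
      · -- letter h⁻¹
        have hy' := hy.symm; subst hy'
        have hinvmono := ap_inv_strictMono hmono
        have hstep : ap h⁻¹ x ∈ Ico (rho h r (N - 1)) (rho h r (N - 1 + 1)) := by
          constructor
          · rw [rho_pred N]
            exact hinvmono.monotone hx.1
          · have e3 : N - 1 + 1 = N := by ring
            rw [e3]
            have h4 : ap h⁻¹ x < ap h⁻¹ (rho h r (N+1)) := hinvmono hx.2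
            rwa [← rho_pred (N+1), show N + 1 - 1 = N by ring] at h4
        have := iht (N - 1) (ap h⁻¹ x) hstep
        rw [hyx, wexp_cons_inv h hne']
        have e1 : N + (-1 + wexp h t) = N - 1 + wexp h t := by ring
        rw [e1]
        exact this
      · -- small letter
        have hysupp : Supp y ⊆ Ioo (rho h r 0) (rho h r 1) := hSsupp y hy
        have h1 : y ≠ h := fun he => hS (he ▸ hy)
        have h2 : y ≠ h⁻¹ := fun he => hS' (he ▸ hy)
        rw [hyx, wexp_cons_other h y h1 h2]
        by_cases hxy : ap y x = x
        · rw [hxy]; exact iht N x hx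
        · have hxS : x ∈ Supp y := hxy
          have hx01 : x ∈ Ioo (rho h r 0) (rho h r 1) := hysupp hxS
          have hN0 : N = 0 := by
            have hl : N < 1 := by
              by_contra hc
              push_neg at hc
              exact absurd (lt_of_le_of_lt (hrmono.monotone hc) (lt_of_le_of_lt hx.1 hx01.2))
                (lt_irrefl _)
            have hg : 0 < N + 1 := by
              by_contra hc
              push_neg at hc
              exact absurd (lt_of_le_of_lt (hrmono.monotone hc)
                (lt_trans hx01.1 hx.2)) (lt_irrefl _)
            omega
          subst hN0
          have : ap y x ∈ Ioo (rho h r 0) (rho h r 1) := hysupp (ap_mem_supp hxS)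
          exact iht 0 (ap y x) ⟨le_of_lt this.1, this.2⟩
      · -- small letter, inverse in S
        have hysupp : Supp y ⊆ Ioo (rho h r 0) (rho h r 1) := by
          rw [← supp_inv y]
          exact hSsupp y⁻¹ hy
        have h1 : y ≠ h := by
          intro he; subst he; exact hS' hy
        have h2 : y ≠ h⁻¹ := by
          intro he; apply hS; rw [he, inv_inv] at hy; exact hy
        rw [hyx, wexp_cons_other h y h1 h2]
        by_cases hxy : ap y x = x
        · rw [hxy]; exact iht N x hx
        · have hxS : x ∈ Supp y := hxy
          have hx01 : x ∈ Ioo (rho h r 0) (rho h r 1) := hysupp hxS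
          have hN0 : N = 0 := by
            have hl : N < 1 := by
              by_contra hc
              push_neg at hc
              exact absurd (lt_of_le_of_lt (hrmono.monotone hc) (lt_of_le_of_lt hx.1 hx01.2))
                (lt_irrefl _)
            have hg : 0 < N + 1 := by
              by_contra hc
              push_neg at hc
              exact absurd (lt_of_le_of_lt (hrmono.monotone hc)
                (lt_trans hx01.1 hx.2)) (lt_irrefl _)
            omega
          subst hN0
          have : ap y x ∈ Ioo (rho h r 0) (rho h r 1) := hysupp (ap_mem_supp hxS)
          exact iht 0 (ap y x) ⟨le_of_lt this.1, this.2⟩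

/-- If the exponent sum is nonzero, the word has no fixed point in the orbital. -/
lemma word_fixed_free (hmonoh : StrictMono (ap h)) (hsupp : Supp h = Ioo p q)
    (hr : r ∈ Ioo p q) (hup : r < ap h r)
    (hSsupp : ∀ z ∈ S, Supp z ⊆ Ioo (rho h r 0) (rho h r 1))
    (hS : h ∉ S) (hS' : h⁻¹ ∉ S)
    {l : List PermR} (hlet : ∀ y ∈ l, y = h ∨ y = h⁻¹ ∨ y ∈ S ∨ y⁻¹ ∈ S)
    (he : wexp h l ≠ 0) : ∀ x ∈ Ioo p q, ap l.prod x ≠ x := by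
  intro x hx
  obtain ⟨N, hN⟩ := rho_cover hmonoh hsupp hr hup hx
  have himg := word_level hmonoh hsupp hr hup hSsupp hS hS' l hlet N x hN
  have hrmono := rho_strictMono hmonoh hsupp hr hup
  intro hfix
  rw [hfix] at himg
  rcases lt_or_gt_of_ne he with hlt | hgt
  · -- e ≤ -1 : image interval is below x
    have : rho h r (N + wexp h l + 1) ≤ rho h r N := hrmono.monotone (by omega)
    exact absurd (lt_of_lt_of_le himg.2 this) (not_lt.mpr hN.1)
  · -- e ≥ 1 : image interval is above x
    have h5 : rho h r (N + 1) ≤ rho h r (N + wexp h l) := hrmono.monotone (by omega)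
    have h6 : x < x := lt_of_lt_of_le hN.2 (le_trans h5 himg.1)
    exact absurd h6 (lt_irrefl x)

end Levels

/-- Transfer of a one-bump factor along a decomposition `f = u * v` where `v`
is the identity on the region `D` containing the bump and the support of `u`. -/
lemma factor_transfer {g f u v : PermR} {a b : ℝ} {D : Set ℝ}
    (hgf : IsOneBumpFactor g f a b) (hfuv : f = u * v) (hu : Supp u ⊆ D)
    (hv : ∀ y ∈ D, ap v y = y) (hab : Ioo a b ⊆ D) : IsOneBumpFactor g u a b := by
  have hfD : ∀ y ∈ D, ap f y = ap u y := by
    intro y hy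
    rw [hfuv, ap_mul]
    exact hv _ (ap_mem_of_supp_subset hu hy)
  obtain ⟨⟨hab', hsub, ha, hb⟩, hagree, hout⟩ := hgf
  refine ⟨⟨hab', ?_, ?_, ?_⟩, ?_, hout⟩
  · intro x hxab
    rw [mem_supp, ← hfD x (hab hxab)]
    exact hsub hxab
  · by_cases haD : a ∈ D
    · rw [mem_supp, ← hfD a haD, not_not]
      exact not_not.mp (fun hc => ha hc)
    · exact fun hc => haD (hu hc)
  · by_cases hbD : b ∈ D
    · rw [mem_supp, ← hfD b hbD, not_not]
      exact not_not.mp (fun hc => hb hc)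
    · exact fun hc => hbD (hu hc)
  · intro x hxab
    rw [hagree x hxab, hfD x (hab hxab)]

/-- One-bump factors transform naturally under conjugation by order-preserving
elements. -/
lemma factor_conj {g f c : PermR} {a b : ℝ} (hmono : StrictMono (ap c))
    (hgf : IsOneBumpFactor g f a b) :
    IsOneBumpFactor (c⁻¹ * g * c) (c⁻¹ * f * c) (ap c a) (ap c b) := by
  have hinvmono := ap_inv_strictMono hmono
  obtain ⟨⟨hab, hsub, ha, hb⟩, hagree, hout⟩ := hgf
  have hapF : ∀ x, ap (c⁻¹ * f * c) x = ap c (ap f (ap c⁻¹ x)) := by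
    intro x
    rw [ap_mul, ap_mul]
  have hapG : ∀ x, ap (c⁻¹ * g * c) x = ap c (ap g (ap c⁻¹ x)) := by
    intro x
    rw [ap_mul, ap_mul]
  have hmem : ∀ x : ℝ, x ∈ Ioo (ap c a) (ap c b) ↔ ap c⁻¹ x ∈ Ioo a b := by
    intro x
    constructor
    · intro hx
      constructor
      · have := hinvmono hx.1
        rwa [ap_inv_ap] at this
      · have := hinvmono hx.2
        rwa [ap_inv_ap] at this
    · intro hx
      constructor
      · have := hmono hx.1
        rwa [ap_ap_inv] at this
      · have := hmono hx.2
        rwa [ap_ap_inv] at this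
  refine ⟨⟨hmono hab, ?_, ?_, ?_⟩, ?_, ?_⟩
  · intro x hx
    rw [mem_supp, hapF]
    intro hc
    apply hsub ((hmem x).mp hx)
    have := congrArg (ap c⁻¹) hc
    rw [ap_inv_ap] at this
    rw [this]
  · rw [mem_supp, hapF, not_not, ap_inv_ap, ap_eq_self ha]
  · rw [mem_supp, hapF, not_not, ap_inv_ap, ap_eq_self hb]
  · intro x hx
    rw [hapG, hapF, hagree _ ((hmem x).mp hx)]
  · intro x hx
    rw [hapG, hout _ (fun hc => hx ((hmem x).mpr hc)), ap_ap_inv]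

/-! ### Auxiliary lemmas for the main theorem -/

lemma rho_shift {h : PermR} {r : ℝ} (j k : ℤ) :
    ap (h ^ k) (rho h r j) = rho h r (j + k) := by
  show ap (h ^ k) (ap (h ^ j) r) = ap (h ^ (j + k)) r
  rw [← ap_mul, ← zpow_add]

lemma rho_fixed {h : PermR} {w : ℝ} (hw : ap h w = w) (k : ℤ) : rho h w k = w := by
  induction k using Int.induction_on with
  | zero => exact rho_zero
  | succ n ih => rw [rho_succ, ih, hw]
  | pred n ih =>
      have e : (-(n:ℤ) - 1) = (-(n:ℤ)) - 1 := by ring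
      rw [e, rho_pred, ih, ap_inv_eq_self hw]

lemma supp_zpow {h : PermR} (k : ℤ) : Supp (h ^ k) ⊆ Supp h := by
  intro w hw
  by_contra hc
  have hfix : ap h w = w := ap_eq_self hc
  exact hw (rho_fixed hfix k)

/-- A nontrivial power of a one-bump map has no fixed points on the bump. -/
lemma zpow_fixed_free {h : PermR} {p q : ℝ} (hmonoh : StrictMono (ap h))
    (hsupp : Supp h = Ioo p q) {e : ℤ} (he : e ≠ 0) {x : ℝ} (hx : x ∈ Ioo p q) :
    ap (h ^ e) x ≠ x := by
  have hxsup : x ∈ Supp h := by rw [hsupp]; exact hx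
  have hkey : ∀ (h' : PermR), StrictMono (ap h') → Supp h' = Ioo p q →
      x < ap h' x → ∀ e' : ℤ, e' ≠ 0 → ap (h' ^ e') x ≠ x := by
    intro h' hm hs hup e' he'
    have hupall : ∀ y ∈ Ioo p q, y < ap h' y :=
      up_on_orbital hm hs hx hup
    have hrm : StrictMono (rho h' x) := rho_strictMono hm hs hx hup
    have : ap (h' ^ e') x = rho h' x e' := rfl
    rw [this]
    rcases lt_or_gt_of_ne he' with hlt | hgt
    · have := hrm hlt
      rw [rho_zero] at this
      exact ne_of_lt this
    · have := hrm hgt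
      rw [rho_zero] at this
      exact ne_of_gt this
  rcases lt_or_gt_of_ne hxsup with hlt | hgt
  · -- h moves x down, so h⁻¹ moves x up
    have hup : x < ap h⁻¹ x := by
      by_contra hc
      push_neg at hc
      have := hmonoh.monotone hc
      rw [ap_ap_inv] at this
      linarith
    have hres := hkey h⁻¹ (ap_inv_strictMono hmonoh) ((supp_inv h).trans hsupp) hup (-e)
      (by omega)
    rw [inv_zpow, zpow_neg, inv_inv] at hres
    exact hres
  · exact hkey h hmonoh hsupp hgt e he

lemma supp_XS {h : PermR} (hmonoh : StrictMono (ap h)) {S : Set PermR} {r : ℝ}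
    (hS : ∀ z ∈ S, Supp z ⊆ Ioo (rho h r 0) (rho h r 1)) (k : ℤ) :
    ∀ y ∈ XS h S k, Supp y ⊆ Ioo (rho h r k) (rho h r (k + 1)) := by
  rintro y ⟨z, hz, rfl⟩
  intro w hw
  have hform : ap (h ^ (-k) * z * h ^ k) w = ap (h ^ k) (ap z (ap (h ^ (-k)) w)) := by
    rw [ap_mul, ap_mul]
  have hv : ap z (ap (h ^ (-k)) w) ≠ ap (h ^ (-k)) w := by
    intro hc
    apply hw
    show ap (h ^ (-k) * z * h ^ k) w = w
    rw [hform, hc, ← ap_mul, ← zpow_add]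
    norm_num
    rfl
  have hvS : ap (h ^ (-k)) w ∈ Supp z := hv
  have hvI : ap (h ^ (-k)) w ∈ Ioo (rho h r 0) (rho h r 1) := hS z hz hvS
  have hw' : w = ap (h ^ k) (ap (h ^ (-k)) w) := by
    rw [← ap_mul, ← zpow_add]
    norm_num
    rfl
  rw [hw']
  constructor
  · have := ap_zpow_strictMono hmonoh k hvI.1
    rwa [rho_shift 0 k, zero_add] at this
  · have := ap_zpow_strictMono hmonoh k hvI.2
    rwa [rho_shift 1 k, add_comm 1 k] at this

/-! ### The per-block analysis -/

lemma block_factor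
    {Z : Set PermR} {az bz : PermR → ℝ} {h : PermR}
    (hnice : IsNiceSet Z)
    (hPL : ∀ g' ∈ Subgroup.closure Z, IsPL g')
    (horb : ∀ z ∈ Z, IsOrbital z (az z) (bz z))
    (hsuppz : ∀ z ∈ Z, Supp z = Ioo (az z) (bz z))
    (hhZ : h ∈ Z)
    (IH2 : ∀ S : Set PermR, S ⊆ Z → h ∉ S →
      ∀ f ∈ Subgroup.closure S, ∀ g' : PermR, IsFactorOf g' f → g' ∈ Subgroup.closure S)
    {u g : PermR} {α β : ℝ}
    (hu : u ∈ Subgroup.closure {z ∈ Z | Ioo (az z) (bz z) ⊆ Ioo (az h) (bz h)})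
    (hfac : IsOneBumpFactor g u α β) :
    g ∈ Subgroup.closure Z := by
  classical
  set ZB : Set PermR := {z ∈ Z | Ioo (az z) (bz z) ⊆ Ioo (az h) (bz h)} with hZBdef
  have hZBsub : ZB ⊆ Z := fun z hz => hz.1
  have hPLh := hPL h (Subgroup.subset_closure hhZ)
  have hmonoh := hPLh.1
  have hsupph : Supp h = Ioo (az h) (bz h) := hsuppz h hhZ
  have horbh := horb h hhZ
  obtain ⟨r, hrB, hr3⟩ := hnice.2.2.2 h hhZ (az h) (bz h) horbh
  set S : Set PermR := ZB \ {h} with hSdef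
  have hSsub : S ⊆ Z := fun z hz => hZBsub hz.1
  have hS_h : h ∉ S := fun hc => hc.2 rfl
  have hinvZ : h⁻¹ ∉ Z := inv_not_mem_nice hnice hhZ hmonoh
  have hS_hinv : h⁻¹ ∉ S := fun hc => hinvZ (hSsub hc)
  have hne' : h⁻¹ ≠ h := inv_ne_self hmonoh horbh
  have hSsupp : ∀ z ∈ S, Supp z ⊆ Ioo r (ap h r) := by
    intro z hz
    have hzZ : z ∈ Z := hSsub hz
    have hzB : Ioo (az z) (bz z) ⊆ Ioo (az h) (bz h) := hz.1.2
    have hzneh : z ≠ h := fun hc => hz.2 (by simp [hc])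
    have hne_sets : Ioo (az z) (bz z) ≠ Ioo (az h) (bz h) := by
      intro hc
      obtain ⟨e1, e2⟩ := Ioo_eq_endpoints (horb z hzZ).1 hc
      apply hnice.2.2.1 h hhZ z hzZ (Ne.symm hzneh) (az h) (bz h) horbh
      rw [← e1, ← e2]
      exact horb z hzZ
    have hss : Ioo (az z) (bz z) ⊂ Ioo (az h) (bz h) :=
      ssubset_iff_subset_ne.mpr ⟨hzB, hne_sets⟩
    rw [hsuppz z hzZ]
    exact hr3 z hzZ (az z) (bz z) (horb z hzZ) hss
  have hSuppuB : Supp u ⊆ Ioo (az h) (bz h) :=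
    (supp_closure hu).trans (iUnion₂_subset (fun z hz => by
      rw [hsuppz z (hZBsub hz)]; exact hz.2))
  -- the common endgame, given that u has no fixed point in the block
  have tail : (∀ x ∈ Ioo (az h) (bz h), ap u x ≠ x) → g ∈ Subgroup.closure Z := by
    intro hff
    obtain ⟨x', hx'⟩ := nonempty_Ioo.mpr hfac.1.1
    have hx'S : x' ∈ Supp u := hfac.1.2.1 hx'
    have hx'B : x' ∈ Ioo (az h) (bz h) := hSuppuB hx'S
    have hpα : az h ≤ α := by
      by_contra hcon
      push_neg at hcon
      have hm : az h ∈ Ioo α β := ⟨hcon, lt_trans hx'B.1 hx'.2⟩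
      exact absurd (hSuppuB (hfac.1.2.1 hm)).1 (lt_irrefl _)
    have hβq : β ≤ bz h := by
      by_contra hcon
      push_neg at hcon
      have hm : bz h ∈ Ioo α β := ⟨lt_trans hx'.1 hx'B.2, hcon⟩
      exact absurd (hSuppuB (hfac.1.2.1 hm)).2 (lt_irrefl _)
    have hαp : α = az h := by
      rcases eq_or_lt_of_le hpα with he | hlt
      · exact he.symm
      · exact absurd (hff α ⟨hlt, lt_of_lt_of_le hfac.1.1 hβq⟩) (not_not.mpr (ap_eq_self hfac.1.2.2.1))
    have hβp : β = bz h := by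
      rcases eq_or_lt_of_le hβq with he | hlt
      · exact he
      · exact absurd (hff β ⟨lt_of_le_of_lt hpα hfac.1.1, hlt⟩)
          (not_not.mpr (ap_eq_self hfac.1.2.2.2))
    have hgu : g = u := by
      apply permR_ext
      intro w
      by_cases hw : w ∈ Ioo α β
      · exact hfac.2.1 w hw
      · rw [hfac.2.2 w hw]
        symm
        refine ap_eq_self (fun hc => hw ?_)
        have := hSuppuB hc
        rw [hαp, hβp]
        exact this
    rw [hgu]
    exact Subgroup.closure_mono hZBsub hu
  -- get a word for u and rewrite it
  obtain ⟨l, hlet0, hlprod⟩ := exists_word hu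
  have hlet : ∀ y ∈ l, y = h ∨ y = h⁻¹ ∨ y ∈ S ∨ y⁻¹ ∈ S := by
    intro y hy
    rcases hlet0 y hy with hyZ | hyZ
    · by_cases hyh : y = h
      · exact Or.inl hyh
      · exact Or.inr (Or.inr (Or.inl ⟨hyZ, by simp [hyh]⟩))
    · by_cases hyh : y⁻¹ = h
      · refine Or.inr (Or.inl ?_)
        rw [← inv_inv y, hyh]
      · exact Or.inr (Or.inr (Or.inr ⟨hyZ, by simp [hyh]⟩))
  obtain ⟨c, hc, hceq⟩ := rewriting h S hS_h hS_hinv hne' l hlet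
  rcases eq_or_ne S ∅ with hS0 | hS0
  · -- no small generators: u is a power of h
    have hXSempty : (⋃ k ∈ Finset.Icc (-(l.length:ℤ)) (l.length:ℤ), XS h S k) = ∅ := by
      rw [hS0]
      simp [XS]
    rw [hXSempty, Subgroup.closure_empty, Subgroup.mem_bot] at hc
    have hue : u = h ^ (wexp h l) := by
      rw [← hlprod, hceq, hc, one_mul]
    by_cases he : wexp h l = 0
    · exfalso
      obtain ⟨y0, hy0⟩ := nonempty_Ioo.mpr hfac.1.1
      have := hfac.1.2.1 hy0
      rw [hue, he, zpow_zero] at this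
      exact this rfl
    · apply tail
      intro x hx
      rw [hue]
      exact zpow_fixed_free hmonoh hsupph he hx
  · -- there are small generators: r < ap h r
    have hup : r < ap h r := by
      obtain ⟨z1, hz1⟩ := Set.nonempty_iff_ne_empty.mpr hS0
      obtain ⟨y1, hy1⟩ := nonempty_Ioo.mpr (horb z1 (hSsub hz1)).1
      have : y1 ∈ Ioo r (ap h r) := by
        apply hSsupp z1 hz1
        rw [hsuppz z1 (hSsub hz1)]
        exact hy1
      exact lt_trans this.1 this.2
    have h01 : rho h r 1 = ap h r := by
      rw [show (1:ℤ) = 0 + 1 from rfl, rho_succ, rho_zero]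
    have hSsupp' : ∀ z ∈ S, Supp z ⊆ Ioo (rho h r 0) (rho h r 1) := by
      rw [rho_zero, h01]
      exact hSsupp
    by_cases he : wexp h l = 0
    · -- exponent zero: descend a level and use the inductive hypothesis
      have huc : u = c := by
        rw [← hlprod, hceq, he, zpow_zero, mul_one]
      have hrmono := rho_strictMono hmonoh hsupph hrB hup
      set K : Finset ℤ := Finset.Icc (-(l.length:ℤ)) (l.length:ℤ) with hK
      set L : ℤ → Set ℝ := fun k => Ioo (rho h r k) (rho h r (k + 1)) with hLdef
      have hLdisj : ∀ k k' : ℤ, k ≠ k' → L k ∩ L k' = ∅ := by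
        intro k k' hkk
        rw [Set.eq_empty_iff_forall_notMem]
        rintro w ⟨hw1, hw2⟩
        rcases lt_or_gt_of_ne hkk with hlt | hgt
        · have hle : rho h r (k + 1) ≤ rho h r k' := hrmono.monotone (by omega)
          have := hw1.2
          have := hw2.1
          linarith
        · have hle : rho h r (k' + 1) ≤ rho h r k := hrmono.monotone (by omega)
          have := hw2.2
          have := hw1.1
          linarith
      have hSuppuL : Supp u ⊆ ⋃ k ∈ K, L k := by
        intro w hw
        rw [huc] at hw
        obtain ⟨y, hy, hwy⟩ := mem_iUnion₂.mp (supp_closure hc hw)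
        obtain ⟨k, hk, hyk⟩ := mem_iUnion₂.mp hy
        exact mem_iUnion₂.mpr ⟨k, hk, supp_XS hmonoh hSsupp' k y hyk hwy⟩
      obtain ⟨x', hx'⟩ := nonempty_Ioo.mpr hfac.1.1
      have hx'S : x' ∈ Supp u := hfac.1.2.1 hx'
      obtain ⟨m, hmK, hx'L⟩ := mem_iUnion₂.mp (hSuppuL hx'S)
      have hrho_not : ∀ j : ℤ, ∀ w ∈ ⋃ k ∈ K, L k, w ≠ rho h r j := by
        intro j w hw heq
        obtain ⟨k, hk, hwk⟩ := mem_iUnion₂.mp hw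
        subst heq
        have h1 : k < j := by
          by_contra hcon
          push_neg at hcon
          exact absurd (lt_of_le_of_lt (hrmono.monotone hcon) hwk.1) (lt_irrefl _)
        have h2 : j < k + 1 := by
          by_contra hcon
          push_neg at hcon
          exact absurd (lt_of_le_of_lt (hrmono.monotone hcon) hwk.2) (lt_irrefl _)
        omega
      have hαm : Ioo α β ⊆ L m := by
        have hβm : β ≤ rho h r (m + 1) := by
          by_contra hcon
          push_neg at hcon
          have hmem : rho h r (m + 1) ∈ Ioo α β := ⟨lt_trans hx'.1 hx'L.2, hcon⟩
          exact hrho_not (m+1) _ (hSuppuL (hfac.1.2.1 hmem)) rfl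
        have hαm' : rho h r m ≤ α := by
          by_contra hcon
          push_neg at hcon
          have hmem : rho h r m ∈ Ioo α β := ⟨hcon, lt_trans hx'L.1 hx'.2⟩
          exact hrho_not m _ (hSuppuL (hfac.1.2.1 hmem)) rfl
        exact Ioo_subset_Ioo hαm' hβm
      -- split off the level-m part
      set Y₂ : Set PermR := {y | ∃ k ∈ K, k ≠ m ∧ y ∈ XS h S k} with hY₂
      have hsplit : ∃ u₁ ∈ Subgroup.closure (XS h S m), ∃ v₁ ∈ Subgroup.closure Y₂,
          u = u₁ * v₁ := by
        apply closure_split (D₁ := L m) (D₂ := (L m)ᶜ)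
        · exact fun y hy => supp_XS hmonoh hSsupp' m y hy
        · rintro y ⟨k, hk, hkm, hyk⟩
          intro w hw
          have hwk : w ∈ L k := supp_XS hmonoh hSsupp' k y hyk hw
          intro hwm
          exact (Set.eq_empty_iff_forall_notMem.mp (hLdisj k m hkm) w) ⟨hwk, hwm⟩
        · exact inter_compl_self _
        · have hsub : (⋃ k ∈ K, XS h S k) ⊆ XS h S m ∪ Y₂ := by
            intro y hy
            obtain ⟨k, hk, hyk⟩ := mem_iUnion₂.mp hy
            by_cases hkm : k = m
            · subst hkm; exact Or.inl hyk
            · exact Or.inr ⟨k, hk, hkm, hyk⟩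
          rw [huc]
          exact Subgroup.closure_mono hsub hc
      obtain ⟨u₁, hu₁, v₁, hv₁, hueq⟩ := hsplit
      have hSuppu₁ : Supp u₁ ⊆ L m :=
        (supp_closure hu₁).trans (iUnion₂_subset (supp_XS hmonoh hSsupp' m))
      have hfac1 : IsOneBumpFactor g u₁ α β := by
        apply factor_transfer hfac hueq hSuppu₁ _ hαm
        intro y hy
        apply ap_eq_self
        intro hc'
        have : y ∈ (L m)ᶜ := (supp_closure hv₁).trans (iUnion₂_subset ?_) hc'
        · exact this hy
        · rintro y' ⟨k, hk, hkm, hy'k⟩ w hw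
          intro hwm
          exact (Set.eq_empty_iff_forall_notMem.mp (hLdisj k m hkm) w)
            ⟨supp_XS hmonoh hSsupp' k y' hy'k hw, hwm⟩
      -- conjugate down to the ground level
      have hmap : ∀ y ∈ XS h S m, h ^ m * y * (h ^ m)⁻¹ ∈ S := by
        rintro y ⟨z, hz, rfl⟩
        have : h ^ m * (h ^ (-m) * z * h ^ m) * (h ^ m)⁻¹ = z := by group
        rw [this]
        exact hz
      set w₀ : PermR := h ^ m * u₁ * (h ^ m)⁻¹ with hw₀def
      have hw₀S : w₀ ∈ Subgroup.closure S := conj_mem_closure hmap hu₁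
      have hmono_c : StrictMono (ap (h ^ m)⁻¹) :=
        ap_inv_strictMono (ap_zpow_strictMono hmonoh m)
      have hfac2 := factor_conj (c := (h ^ m)⁻¹) hmono_c hfac1
      rw [inv_inv] at hfac2
      -- hfac2 : IsOneBumpFactor (h^m * g * (h^m)⁻¹) (h^m * u₁ * (h^m)⁻¹) _ _
      have hg₀ : h ^ m * g * (h ^ m)⁻¹ ∈ Subgroup.closure S :=
        IH2 S hSsub hS_h w₀ hw₀S _ ⟨_, _, hfac2⟩
      have hgeq : g = (h ^ m)⁻¹ * (h ^ m * g * (h ^ m)⁻¹) * (h ^ m) := by group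
      rw [hgeq]
      have hhmem : h ∈ Subgroup.closure Z := Subgroup.subset_closure hhZ
      exact Subgroup.mul_mem _
        (Subgroup.mul_mem _ (Subgroup.inv_mem _ (Subgroup.zpow_mem _ hhmem m))
          (Subgroup.closure_mono hSsub hg₀))
        (Subgroup.zpow_mem _ hhmem m)
    · -- nonzero exponent: u is one bump on the whole block
      apply tail
      intro x hx
      have := word_fixed_free hmonoh hsupph hrB hup hSsupp' hS_h hS_hinv hlet he x hx
      rwa [hlprod] at this

lemma block_split
    {Z : Set PermR} {az bz : PermR → ℝ} {h : PermR}
    (hnice : IsNiceSet Z)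
    (hPL : ∀ g' ∈ Subgroup.closure Z, IsPL g')
    (horb : ∀ z ∈ Z, IsOrbital z (az z) (bz z))
    (hsuppz : ∀ z ∈ Z, Supp z = Ioo (az z) (bz z))
    (hhZ : h ∈ Z)
    (IH1 : ∀ S : Set PermR, S ⊆ Z → h ∉ S →
      ∀ f ∈ Subgroup.closure S, f ∈ SplitGroup (Subgroup.closure S))
    {u : PermR}
    (hu : u ∈ Subgroup.closure {z ∈ Z | Ioo (az z) (bz z) ⊆ Ioo (az h) (bz h)}) :
    u ∈ SplitGroup (Subgroup.closure Z) := by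
  classical
  set ZB : Set PermR := {z ∈ Z | Ioo (az z) (bz z) ⊆ Ioo (az h) (bz h)} with hZBdef
  have hZBsub : ZB ⊆ Z := fun z hz => hz.1
  have hPLh := hPL h (Subgroup.subset_closure hhZ)
  have hmonoh := hPLh.1
  have hsupph : Supp h = Ioo (az h) (bz h) := hsuppz h hhZ
  have horbh := horb h hhZ
  obtain ⟨r, hrB, hr3⟩ := hnice.2.2.2 h hhZ (az h) (bz h) horbh
  set S : Set PermR := ZB \ {h} with hSdef
  have hSsub : S ⊆ Z := fun z hz => hZBsub hz.1
  have hS_h : h ∉ S := fun hc => hc.2 rfl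
  have hinvZ : h⁻¹ ∉ Z := inv_not_mem_nice hnice hhZ hmonoh
  have hS_hinv : h⁻¹ ∉ S := fun hc => hinvZ (hSsub hc)
  have hne' : h⁻¹ ≠ h := inv_ne_self hmonoh horbh
  have hSsupp : ∀ z ∈ S, Supp z ⊆ Ioo r (ap h r) := by
    intro z hz
    have hzZ : z ∈ Z := hSsub hz
    have hzB : Ioo (az z) (bz z) ⊆ Ioo (az h) (bz h) := hz.1.2
    have hzneh : z ≠ h := fun hc => hz.2 (by simp [hc])
    have hne_sets : Ioo (az z) (bz z) ≠ Ioo (az h) (bz h) := by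
      intro hc
      obtain ⟨e1, e2⟩ := Ioo_eq_endpoints (horb z hzZ).1 hc
      apply hnice.2.2.1 h hhZ z hzZ (Ne.symm hzneh) (az h) (bz h) horbh
      rw [← e1, ← e2]
      exact horb z hzZ
    rw [hsuppz z hzZ]
    exact hr3 z hzZ (az z) (bz z) (horb z hzZ) (ssubset_iff_subset_ne.mpr ⟨hzB, hne_sets⟩)
  obtain ⟨l, hlet0, hlprod⟩ := exists_word hu
  have hlet : ∀ y ∈ l, y = h ∨ y = h⁻¹ ∨ y ∈ S ∨ y⁻¹ ∈ S := by
    intro y hy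
    rcases hlet0 y hy with hyZ | hyZ
    · by_cases hyh : y = h
      · exact Or.inl hyh
      · exact Or.inr (Or.inr (Or.inl ⟨hyZ, by simp [hyh]⟩))
    · by_cases hyh : y⁻¹ = h
      · refine Or.inr (Or.inl ?_)
        rw [← inv_inv y, hyh]
      · exact Or.inr (Or.inr (Or.inr ⟨hyZ, by simp [hyh]⟩))
  obtain ⟨c, hc, hceq⟩ := rewriting h S hS_h hS_hinv hne' l hlet
  have hue : u = c * h ^ (wexp h l) := by rw [← hlprod, hceq]
  -- the h-power part is a one-bump factor of itself
  have hpow : h ^ (wexp h l) ∈ SplitGroup (Subgroup.closure Z) := by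
    by_cases he : wexp h l = 0
    · rw [he, zpow_zero]
      exact Subgroup.one_mem _
    · apply Subgroup.subset_closure
      refine ⟨h ^ (wexp h l), Subgroup.zpow_mem _ (Subgroup.subset_closure hhZ) _,
        az h, bz h, ?_, fun x _ => rfl, ?_⟩
      · refine ⟨horbh.1, ?_, ?_, ?_⟩
        · intro x hx
          exact zpow_fixed_free hmonoh hsupph he hx
        · intro hcon
          have := supp_zpow _ hcon
          rw [hsupph] at this
          exact absurd this.1 (lt_irrefl _)
        · intro hcon
          have := supp_zpow _ hcon
          rw [hsupph] at this
          exact absurd this.2 (lt_irrefl _)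
      · intro x hx
        apply ap_eq_self
        intro hcon
        apply hx
        have := supp_zpow _ hcon
        rwa [hsupph] at this
  -- the conjugate part
  have hcS : c ∈ SplitGroup (Subgroup.closure Z) := by
    rcases eq_or_ne S ∅ with hS0 | hS0
    · have hXSempty : (⋃ k ∈ Finset.Icc (-(l.length:ℤ)) (l.length:ℤ), XS h S k) = ∅ := by
        rw [hS0]; simp [XS]
      rw [hXSempty, Subgroup.closure_empty, Subgroup.mem_bot] at hc
      rw [hc]
      exact Subgroup.one_mem _
    · have hup : r < ap h r := by
        obtain ⟨z1, hz1⟩ := Set.nonempty_iff_ne_empty.mpr hS0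
        obtain ⟨y1, hy1⟩ := nonempty_Ioo.mpr (horb z1 (hSsub hz1)).1
        have : y1 ∈ Ioo r (ap h r) := by
          apply hSsupp z1 hz1
          rw [hsuppz z1 (hSsub hz1)]
          exact hy1
        exact lt_trans this.1 this.2
      have h01 : rho h r 1 = ap h r := by
        rw [show (1:ℤ) = 0 + 1 from rfl, rho_succ, rho_zero]
      have hSsupp' : ∀ z ∈ S, Supp z ⊆ Ioo (rho h r 0) (rho h r 1) := by
        rw [rho_zero, h01]
        exact hSsupp
      have hrmono := rho_strictMono hmonoh hsupph hrB hup
      set K : Finset ℤ := Finset.Icc (-(l.length:ℤ)) (l.length:ℤ) with hK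
      have hLdisj : ∀ k k' : ℤ, k ≠ k' →
          Ioo (rho h r k) (rho h r (k+1)) ∩ Ioo (rho h r k') (rho h r (k'+1)) = ∅ := by
        intro k k' hkk
        rw [Set.eq_empty_iff_forall_notMem]
        rintro w ⟨hw1, hw2⟩
        rcases lt_or_gt_of_ne hkk with hlt | hgt
        · have hle : rho h r (k + 1) ≤ rho h r k' := hrmono.monotone (by omega)
          have := hw1.2
          have := hw2.1
          linarith
        · have hle : rho h r (k' + 1) ≤ rho h r k := hrmono.monotone (by omega)
          have := hw2.2
          have := hw1.1
          linarith
      obtain ⟨l', hl'prod, hl'mem⟩ := closure_multi_split K (fun k => XS h S k)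
        (fun k => Ioo (rho h r k) (rho h r (k+1)))
        (fun k _ => supp_XS hmonoh hSsupp' k)
        (fun k _ k' _ hkk => hLdisj k k' hkk) c hc
      rw [hl'prod]
      apply list_prod_mem
      intro w' hw'
      obtain ⟨k, hkK, hw'k⟩ := hl'mem w' hw'
      -- conjugate to ground level, use IH, conjugate back
      have hmap : ∀ y ∈ XS h S k, h ^ k * y * (h ^ k)⁻¹ ∈ S := by
        rintro y ⟨z, hz, rfl⟩
        have heq : h ^ k * (h ^ (-k) * z * h ^ k) * (h ^ k)⁻¹ = z := by group
        rw [heq]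
        exact hz
      have hw₀S : h ^ k * w' * (h ^ k)⁻¹ ∈ Subgroup.closure S := conj_mem_closure hmap hw'k
      have hw₀split : h ^ k * w' * (h ^ k)⁻¹ ∈ SplitGroup (Subgroup.closure S) :=
        IH1 S hSsub hS_h _ hw₀S
      have hmapF : ∀ g₀ ∈ {g' : PermR | ∃ f ∈ Subgroup.closure S, IsFactorOf g' f},
          (h ^ k)⁻¹ * g₀ * ((h ^ k)⁻¹)⁻¹ ∈
            {g' : PermR | ∃ f ∈ Subgroup.closure Z, IsFactorOf g' f} := by
        rintro g₀ ⟨f₀, hf₀, a, b, hfac₀⟩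
        have hmono_k : StrictMono (ap (h ^ k)) := ap_zpow_strictMono hmonoh k
        have := factor_conj (c := h ^ k) hmono_k hfac₀
        refine ⟨(h ^ k)⁻¹ * f₀ * h ^ k, ?_, ?_⟩
        · have hhmem : h ∈ Subgroup.closure Z := Subgroup.subset_closure hhZ
          exact Subgroup.mul_mem _
            (Subgroup.mul_mem _ (Subgroup.inv_mem _ (Subgroup.zpow_mem _ hhmem k))
              (Subgroup.closure_mono hSsub hf₀))
            (Subgroup.zpow_mem _ hhmem k)
        · rw [inv_inv]
          exact ⟨_, _, this⟩
      have hfinal := conj_mem_closure (c := (h ^ k)⁻¹) hmapF hw₀split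
      have heq2 : (h ^ k)⁻¹ * (h ^ k * w' * (h ^ k)⁻¹) * ((h ^ k)⁻¹)⁻¹ = w' := by group
      rw [heq2] at hfinal
      exact hfinal
  rw [hue]
  exact Subgroup.mul_mem _ hcS hpow

/-! ### The main induction -/

theorem main_ind : ∀ n : ℕ, ∀ Z : Set PermR, Z.Finite → Z.ncard ≤ n → IsNiceSet Z →
    (∀ g ∈ Subgroup.closure Z, IsPL g) →
    (∀ f ∈ Subgroup.closure Z, ∀ g : PermR, IsFactorOf g f → g ∈ Subgroup.closure Z) ∧
    (∀ f ∈ Subgroup.closure Z, f ∈ SplitGroup (Subgroup.closure Z)) := by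
  intro n
  induction n using Nat.strong_induction_on with
  | _ n IH =>
  intro Z hZfin hcard hnice hPL
  classical
  -- choose the orbital of each generator
  have hex : ∀ z : PermR, ∃ ab : ℝ × ℝ, z ∈ Z → IsOrbital z ab.1 ab.2 := by
    intro z
    by_cases hz : z ∈ Z
    · obtain ⟨⟨a, b, hab⟩, _⟩ := hnice.1 z hz
      exact ⟨(a, b), fun _ => hab⟩
    · exact ⟨(0, 1), fun hc => absurd hc hz⟩
  choose A hA using hex
  set az : PermR → ℝ := fun z => (A z).1 with hazd
  set bz : PermR → ℝ := fun z => (A z).2 with hbzd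
  have horb : ∀ z ∈ Z, IsOrbital z (az z) (bz z) := fun z hz => hA z hz
  have hsuppz : ∀ z ∈ Z, Supp z = Ioo (az z) (bz z) := by
    intro z hz
    apply supp_eq_of_unique_orbital (hPL z (Subgroup.subset_closure hz)) (horb z hz)
    intro a' b' hab'
    exact (hnice.1 z hz).2 (az z) (bz z) a' b' (horb z hz) hab'
  -- the inductive hypothesis, packaged for proper subsets
  have IHS : ∀ S : Set PermR, S ⊆ Z → (∃ h0 ∈ Z, h0 ∉ S) →
      (∀ f ∈ Subgroup.closure S, ∀ g : PermR, IsFactorOf g f → g ∈ Subgroup.closure S) ∧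
      (∀ f ∈ Subgroup.closure S, f ∈ SplitGroup (Subgroup.closure S)) := by
    rintro S hSZ ⟨h0, hh0Z, hh0S⟩
    have hSfin : S.Finite := hZfin.subset hSZ
    have hss : S ⊂ Z := (Set.ssubset_iff_of_subset hSZ).mpr ⟨h0, hh0Z, hh0S⟩
    have hcard' : S.ncard < Z.ncard := Set.ncard_lt_ncard hss hZfin
    exact IH S.ncard (by omega) S hSfin le_rfl (nice_subset hnice hSZ)
      (fun g hg => hPL g (Subgroup.closure_mono hSZ hg))
  -- top blocks
  set P : Set PermR := {t ∈ Z | ∀ z ∈ Z, Ioo (az z) (bz z) ⊆ Ioo (az t) (bz t) ∨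
      Ioo (az z) (bz z) ∩ Ioo (az t) (bz t) = ∅} with hPdef
  have hPZ : P ⊆ Z := fun t ht => ht.1
  have hPfin : P.Finite := hZfin.subset hPZ
  have htopfact : ∀ w ∈ Z, ∃ t ∈ P, Ioo (az w) (bz w) ⊆ Ioo (az t) (bz t) := by
    intro w hw
    obtain ⟨x, hx⟩ := nonempty_Ioo.mpr (horb w hw).1
    obtain ⟨t, htZ, hxt, hdich⟩ := exists_top hZfin hnice az bz horb hw hx
    refine ⟨t, ⟨htZ, hdich⟩, ?_⟩
    rcases hdich w hw with hsub | hdisj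
    · exact hsub
    · exact (Set.eq_empty_iff_forall_notMem.mp hdisj x ⟨hx, hxt⟩).elim
  have hPdisj : ∀ t ∈ hPfin.toFinset, ∀ t' ∈ hPfin.toFinset, t ≠ t' →
      Ioo (az t) (bz t) ∩ Ioo (az t') (bz t') = ∅ := by
    intro t ht t' ht' hne
    rw [Set.Finite.mem_toFinset] at ht ht'
    rcases ht'.2 t ht.1 with hsub | hdisj
    · rcases ht.2 t' ht'.1 with hsub' | hdisj'
      · -- two-way inclusion: equal orbitals, contradicting (Z2)
        exfalso
        have heq : Ioo (az t) (bz t) = Ioo (az t') (bz t') := Subset.antisymm hsub hsub'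
        obtain ⟨e1, e2⟩ := Ioo_eq_endpoints (horb t ht.1).1 heq
        apply hnice.2.2.1 t ht.1 t' ht'.1 hne (az t) (bz t) (horb t ht.1)
        rw [e1, e2]
        exact horb t' ht'.1
      · -- A_{t'} ∩ A_t = ∅ together with A_t ⊆ A_{t'}: A_t would be empty
        exfalso
        obtain ⟨x, hx⟩ := nonempty_Ioo.mpr (horb t ht.1).1
        exact (Set.eq_empty_iff_forall_notMem.mp hdisj' x) ⟨hsub hx, hx⟩
    · exact hdisj
  -- endpoints of top blocks are fixed by all generators
  have hendpt : ∀ t ∈ P, ∀ w : ℝ, (w = az t ∨ w = bz t) → ∀ z ∈ Z, w ∉ Supp z := by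
    intro t ht w hw z hz
    rw [hsuppz z hz]
    intro hwz
    rcases ht.2 z hz with hsub | hdisj
    · rcases hw with rfl | rfl
      · exact absurd (hsub hwz).1 (lt_irrefl _)
      · exact absurd (hsub hwz).2 (lt_irrefl _)
    · have hem := Set.eq_empty_iff_forall_notMem.mp hdisj
      rcases hw with rfl | rfl
      · set y := (az t + min (bz z) (bz t)) / 2 with hy
        have h1 : az t < min (bz z) (bz t) := lt_min hwz.2 (horb t (hPZ ht)).1
        have hm1 := min_le_left (bz z) (bz t)
        have hm2 := min_le_right (bz z) (bz t)
        have hy1 : az t < y := by rw [hy]; linarith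
        have hy2 : y < bz z := by rw [hy]; linarith
        have hy3 : y < bz t := by rw [hy]; linarith
        exact hem y ⟨⟨lt_trans hwz.1 hy1, hy2⟩, ⟨hy1, hy3⟩⟩
      · set y := (max (az z) (az t) + bz t) / 2 with hy
        have h1 : max (az z) (az t) < bz t := max_lt hwz.1 (horb t (hPZ ht)).1
        have hm1 := le_max_left (az z) (az t)
        have hm2 := le_max_right (az z) (az t)
        have hy1 : y < bz t := by rw [hy]; linarith
        have hy2 : az z < y := by rw [hy]; linarith
        have hy3 : az t < y := by rw [hy]; linarith
        exact hem y ⟨⟨hy2, lt_trans hy1 hwz.2⟩, ⟨hy3, hy1⟩⟩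
  -- block decomposition data
  have hY1supp : ∀ t ∈ P, ∀ y ∈ {z ∈ Z | Ioo (az z) (bz z) ⊆ Ioo (az t) (bz t)},
      Supp y ⊆ Ioo (az t) (bz t) := by
    intro t ht y hy
    rw [hsuppz y hy.1]
    exact hy.2
  constructor
  · -- every one-bump factor of an element of the closure lies in the closure
    intro f hf g hgf
    obtain ⟨α, β, hfac⟩ := hgf
    obtain ⟨x, hx⟩ := nonempty_Ioo.mpr hfac.1.1
    have hxS : x ∈ Supp f := hfac.1.2.1 hx
    obtain ⟨z₀, hz₀, hxz₀⟩ := mem_iUnion₂.mp (supp_closure hf hxS)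
    rw [hsuppz z₀ hz₀] at hxz₀
    obtain ⟨t, htZ, hxt, hdich⟩ := exists_top hZfin hnice az bz horb hz₀ hxz₀
    have htP : t ∈ P := ⟨htZ, hdich⟩
    -- the endpoints of the block are fixed by f
    have hendf : ∀ w : ℝ, (w = az t ∨ w = bz t) → w ∉ Supp f := by
      intro w hw hwf
      obtain ⟨z, hz, hwz⟩ := mem_iUnion₂.mp (supp_closure hf hwf)
      exact hendpt t htP w hw z hz hwz
    -- the bump is inside the block
    have hαβ : Ioo α β ⊆ Ioo (az t) (bz t) := by
      have hβ : β ≤ bz t := by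
        by_contra hcon
        push_neg at hcon
        exact hendf (bz t) (Or.inr rfl) (hfac.1.2.1 ⟨lt_trans hx.1 hxt.2, hcon⟩)
      have hα : az t ≤ α := by
        by_contra hcon
        push_neg at hcon
        exact hendf (az t) (Or.inl rfl) (hfac.1.2.1 ⟨hcon, lt_trans hxt.1 hx.2⟩)
      exact Ioo_subset_Ioo hα hβ
    -- split f into the block part and the rest
    set Y₁ : Set PermR := {z ∈ Z | Ioo (az z) (bz z) ⊆ Ioo (az t) (bz t)} with hY₁def
    have hY₁Z : Y₁ ⊆ Z := fun z hz => hz.1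
    have hsplit : ∃ u ∈ Subgroup.closure Y₁, ∃ v ∈ Subgroup.closure (Z \ Y₁), f = u * v := by
      apply closure_split (D₁ := Ioo (az t) (bz t)) (D₂ := (Ioo (az t) (bz t))ᶜ)
      · exact hY1supp t htP
      · intro y hy
        rw [hsuppz y hy.1]
        intro w hw hwB
        rcases hdich y hy.1 with hsub | hdisj
        · exact hy.2 ⟨hy.1, hsub⟩
        · exact (Set.eq_empty_iff_forall_notMem.mp hdisj w) ⟨hw, hwB⟩
      · exact inter_compl_self _
      · rwa [Set.union_diff_cancel hY₁Z]
    obtain ⟨u, hu, v, hv, hfeq⟩ := hsplit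
    have hSuppu : Supp u ⊆ Ioo (az t) (bz t) :=
      (supp_closure hu).trans (iUnion₂_subset (hY1supp t htP))
    have hSuppv : Supp v ⊆ (Ioo (az t) (bz t))ᶜ := by
      apply (supp_closure hv).trans (iUnion₂_subset ?_)
      intro y hy
      rw [hsuppz y hy.1]
      intro w hw hwB
      rcases hdich y hy.1 with hsub | hdisj
      · exact hy.2 ⟨hy.1, hsub⟩
      · exact (Set.eq_empty_iff_forall_notMem.mp hdisj w) ⟨hw, hwB⟩
    have hfacu : IsOneBumpFactor g u α β := by
      apply factor_transfer hfac hfeq hSuppu _ hαβ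
      intro y hy
      exact ap_eq_self (fun hc => hSuppv hc hy)
    exact block_factor hnice hPL horb hsuppz htZ
      (fun S hS hhS => (IHS S hS ⟨t, htZ, hhS⟩).1) hu hfacu
  · -- every element of the closure is a product of one-bump factors
    intro f hf
    have hcover : Z ⊆ ⋃ t ∈ hPfin.toFinset, {z ∈ Z | Ioo (az z) (bz z) ⊆ Ioo (az t) (bz t)} := by
      intro w hw
      obtain ⟨t, htP, hsub⟩ := htopfact w hw
      exact mem_iUnion₂.mpr ⟨t, hPfin.mem_toFinset.mpr htP, hw, hsub⟩
    have hf' : f ∈ Subgroup.closure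
        (⋃ t ∈ hPfin.toFinset, {z ∈ Z | Ioo (az z) (bz z) ⊆ Ioo (az t) (bz t)}) :=
      Subgroup.closure_mono hcover hf
    obtain ⟨lst, hfprod, hmem⟩ := closure_multi_split hPfin.toFinset
      (fun t => {z ∈ Z | Ioo (az z) (bz z) ⊆ Ioo (az t) (bz t)})
      (fun t => Ioo (az t) (bz t))
      (fun t ht => hY1supp t (hPfin.mem_toFinset.mp ht))
      (fun t ht t' ht' hne => hPdisj t ht t' ht' hne) f hf'
    rw [hfprod]
    apply list_prod_mem
    intro u hu
    obtain ⟨t, htP, hut⟩ := hmem u hu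
    have htZ : t ∈ Z := hPZ (hPfin.mem_toFinset.mp htP)
    exact block_split hnice hPL horb hsuppz htZ
      (fun S hS hhS => (IHS S hS ⟨t, htZ, hhS⟩).2) hut

theorem statement16 (Z : Set PermR) (hZfin : Z.Finite) (hZnice : IsNiceSet Z)
    (H : Subgroup PermR) (hH : H = Subgroup.closure Z)
    (hPL : ∀ g ∈ H, IsPL g) :
    SplitGroup H = H ∧ ∀ f ∈ H, ∀ g : PermR, IsFactorOf g f → g ∈ H := by
  subst hH
  have hmain := main_ind Z.ncard Z hZfin le_rfl hZnice hPL
  constructor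
  · apply le_antisymm
    · apply (Subgroup.closure_le _).mpr
      rintro g ⟨f, hf, hgf⟩
      exact hmain.1 f hf g hgf
    · intro f hf
      exact hmain.2 f hf
  · exact hmain.1

end PLPaper
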